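/- arXiv:1411.7955 — 4 statements merged into one kernel-verified Lean document; each statement's English description precedes it below -/
import Mathlib

section
/- Let X₁,…,Xₙ and Y₁,…,Y_m be as above with E|X|^α, E|Y|^α < ∞, α ∈ (0,2). Then as min(n,m) → ∞, the sample statistic ℰ̂(Xₙ, Y_m; α) converges almost surely to ℰ(X,Y;α). -/
open MeasureTheory ProbabilityTheory Finset Filter
open scoped ENNReal Topology

noncomputable section

namespace EnergyAux

/-- Clamp a real number to `[-M, M]`. -/
def clampR (M : ℕ) (x : ℝ) : ℝ := max (-(M:ℝ)) (min x (M:ℝ))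

/-- Indicator of `|x| > M`. -/
def eIb (M : ℕ) (x : ℝ) : ℝ := if (M:ℝ) < |x| then 1 else 0

lemma abs_clampR_le (M : ℕ) (x : ℝ) : |clampR M x| ≤ M := by
  rw [abs_le]
  refine ⟨le_max_left _ _, max_le ?_ (min_le_right _ _)⟩
  exact le_trans (neg_nonpos.2 (Nat.cast_nonneg M)) (Nat.cast_nonneg M)

lemma abs_clampR_le_abs (M : ℕ) (x : ℝ) : |clampR M x| ≤ |x| := by
  rcases le_total 0 x with h | h
  · have h0 : (0:ℝ) ≤ min x (M:ℝ) := le_min h (Nat.cast_nonneg M)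
    have h1 : clampR M x = min x M := max_eq_right (le_trans (neg_nonpos.2 (Nat.cast_nonneg M)) h0)
    rw [h1, abs_of_nonneg h0, abs_of_nonneg h]
    exact min_le_left _ _
  · have h1 : min x (M:ℝ) = x := min_eq_left (h.trans (Nat.cast_nonneg M))
    have h2 : max (-(M:ℝ)) x ≤ 0 := max_le (neg_nonpos.2 (Nat.cast_nonneg M)) h
    rw [clampR, h1, abs_of_nonpos h2, abs_of_nonpos h]
    exact neg_le_neg (le_max_right _ _)

lemma clampR_eq_self {M : ℕ} {x : ℝ} (h : |x| ≤ M) : clampR M x = x := by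
  rw [abs_le] at h
  rw [clampR, min_eq_left h.2, max_eq_right h.1]

lemma continuous_clampR (M : ℕ) : Continuous (clampR M) :=
  continuous_const.max (continuous_id.min continuous_const)

lemma measurable_eIb (M : ℕ) : Measurable (eIb M) :=
  Measurable.ite (measurableSet_lt measurable_const measurable_abs)
    measurable_const measurable_const

lemma eIb_nonneg (M : ℕ) (x : ℝ) : 0 ≤ eIb M x := by unfold eIb; split <;> norm_num

lemma eIb_le_one (M : ℕ) (x : ℝ) : eIb M x ≤ 1 := by unfold eIb; split <;> norm_num

lemma continuous_absRpow {α : ℝ} (hα : 0 < α) : Continuous (fun x : ℝ => |x| ^ α) :=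
  continuous_abs.rpow_const (fun _ => Or.inr hα.le)

lemma rpow_abs_sub_le {α : ℝ} (hα : 0 < α) (x y : ℝ) :
    |x - y| ^ α ≤ 2 ^ α * (|x| ^ α + |y| ^ α) := by
  have h1 : |x - y| ≤ 2 * max |x| |y| := by
    have : |x - y| ≤ |x| + |y| := by
      simpa [sub_eq_add_neg, abs_neg] using abs_add_le x (-y)
    refine this.trans ?_
    rw [two_mul]
    exact add_le_add (le_max_left _ _) (le_max_right _ _)
  have h2 : |x - y| ^ α ≤ (2 * max |x| |y|) ^ α :=
    Real.rpow_le_rpow (abs_nonneg _) h1 hα.le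
  have h3 : (2 * max |x| |y|) ^ α = 2 ^ α * (max |x| |y|) ^ α :=
    Real.mul_rpow (by norm_num) (le_max_of_le_left (abs_nonneg _))
  have h4 : (max |x| |y|) ^ α ≤ |x| ^ α + |y| ^ α := by
    rcases max_cases |x| |y| with ⟨hm, _⟩ | ⟨hm, _⟩ <;> rw [hm]
    · exact le_add_of_nonneg_right (Real.rpow_nonneg (abs_nonneg _) _)
    · exact le_add_of_nonneg_left (Real.rpow_nonneg (abs_nonneg _) _)
  calc |x - y| ^ α ≤ 2 ^ α * (max |x| |y|) ^ α := h3 ▸ h2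
    _ ≤ 2 ^ α * (|x| ^ α + |y| ^ α) := by
        have : (0:ℝ) ≤ 2 ^ α := Real.rpow_nonneg (by norm_num) _
        exact mul_le_mul_of_nonneg_left h4 this


lemma trunc_diff_bound_aux {α : ℝ} (hα : 0 < α) (M : ℕ) (x y : ℝ)
    (he : (1:ℝ) ≤ eIb M x + eIb M y) :
    abs (|x - y| ^ α - |clampR M x - clampR M y| ^ α) ≤
      2 ^ (α + 1) * ((|x| ^ α + |y| ^ α) * (eIb M x + eIb M y)) := by
  have hS : (0:ℝ) ≤ |x| ^ α + |y| ^ α :=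
    add_nonneg (Real.rpow_nonneg (abs_nonneg _) _) (Real.rpow_nonneg (abs_nonneg _) _)
  have hb1 : |x - y| ^ α ≤ 2 ^ α * (|x| ^ α + |y| ^ α) := rpow_abs_sub_le hα x y
  have hb2 : |clampR M x - clampR M y| ^ α ≤ 2 ^ α * (|x| ^ α + |y| ^ α) := by
    refine (rpow_abs_sub_le hα _ _).trans ?_
    have h2 : (0:ℝ) ≤ 2 ^ α := Real.rpow_nonneg (by norm_num) _
    refine mul_le_mul_of_nonneg_left ?_ h2
    exact add_le_add
      (Real.rpow_le_rpow (abs_nonneg _) (abs_clampR_le_abs M x) hα.le)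
      (Real.rpow_le_rpow (abs_nonneg _) (abs_clampR_le_abs M y) hα.le)
  have habs : abs (|x - y| ^ α - |clampR M x - clampR M y| ^ α) ≤
      2 ^ (α + 1) * (|x| ^ α + |y| ^ α) := by
    rw [abs_sub_le_iff]
    have hp1 : (0:ℝ) ≤ |x - y| ^ α := Real.rpow_nonneg (abs_nonneg _) _
    have hp2 : (0:ℝ) ≤ |clampR M x - clampR M y| ^ α := Real.rpow_nonneg (abs_nonneg _) _
    have h2 : (2:ℝ) ^ (α + 1) = 2 ^ α * 2 := by
      rw [Real.rpow_add (by norm_num : (0:ℝ) < 2), Real.rpow_one]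
    constructor <;> nlinarith
  refine habs.trans ?_
  have h2 : (0:ℝ) ≤ 2 ^ (α + 1) * (|x| ^ α + |y| ^ α) :=
    mul_nonneg (Real.rpow_nonneg (by norm_num) _) hS
  calc 2 ^ (α + 1) * (|x| ^ α + |y| ^ α)
      ≤ 2 ^ (α + 1) * (|x| ^ α + |y| ^ α) * (eIb M x + eIb M y) :=
        le_mul_of_one_le_right h2 he
    _ = 2 ^ (α + 1) * ((|x| ^ α + |y| ^ α) * (eIb M x + eIb M y)) := by ring

lemma trunc_diff_bound {α : ℝ} (hα : 0 < α) (M : ℕ) (x y : ℝ) :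
    abs (|x - y| ^ α - |clampR M x - clampR M y| ^ α) ≤
      2 ^ (α + 1) * ((|x| ^ α + |y| ^ α) * (eIb M x + eIb M y)) := by
  by_cases hx : |x| ≤ M
  · by_cases hy : |y| ≤ M
    · simp [clampR_eq_self hx, clampR_eq_self hy, eIb, not_lt.2 hx, not_lt.2 hy]
    · have he : (1:ℝ) ≤ eIb M x + eIb M y := by
        have : eIb M y = 1 := if_pos (not_le.1 hy)
        have h0 := eIb_nonneg M x
        linarith
      exact trunc_diff_bound_aux hα M x y he
  · have he : (1:ℝ) ≤ eIb M x + eIb M y := by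
      have : eIb M x = 1 := if_pos (not_le.1 hx)
      have h0 := eIb_nonneg M y
      linarith
    exact trunc_diff_bound_aux hα M x y he

/-- Normalized two-sample V-statistic of a kernel `f`. -/
def Vs (f : ℝ → ℝ → ℝ) (u w : ℕ → ℝ) (p : ℕ × ℕ) : ℝ :=
  (∑ i ∈ Finset.range p.1, ∑ j ∈ Finset.range p.2, f (u i) (w j)) / ((p.1 : ℝ) * p.2)

lemma Vs_congr {f g : ℝ → ℝ → ℝ} (h : ∀ x y, f x y = g x y) (u w : ℕ → ℝ) (p : ℕ × ℕ) :
    Vs f u w p = Vs g u w p := by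
  unfold Vs
  congr 1
  exact Finset.sum_congr rfl fun i _ => Finset.sum_congr rfl fun j _ => h _ _

lemma Vs_sum {ι : Type*} (s : Finset ι) (F G : ι → ℝ → ℝ) (u w : ℕ → ℝ) (p : ℕ × ℕ) :
    Vs (fun x y => ∑ k ∈ s, F k x * G k y) u w p
      = ∑ k ∈ s, Vs (fun x y => F k x * G k y) u w p := by
  unfold Vs
  rw [← Finset.sum_div]
  congr 1
  have h1 : ∀ i, ∑ j ∈ Finset.range p.2, ∑ k ∈ s, F k (u i) * G k (w j)
      = ∑ k ∈ s, ∑ j ∈ Finset.range p.2, F k (u i) * G k (w j) := fun i => Finset.sum_comm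
  simp_rw [h1]
  exact Finset.sum_comm

lemma tendsto_fst_nat : Tendsto (Prod.fst : ℕ × ℕ → ℕ) atTop atTop := by
  rw [← prod_atTop_atTop_eq]; exact tendsto_fst

lemma tendsto_snd_nat : Tendsto (Prod.snd : ℕ × ℕ → ℕ) atTop atTop := by
  rw [← prod_atTop_atTop_eq]; exact tendsto_snd

lemma Vs_prod_tendsto {f g : ℝ → ℝ} {u w : ℕ → ℝ} {a b : ℝ}
    (hu : Tendsto (fun n : ℕ => (∑ i ∈ Finset.range n, f (u i)) / n) atTop (𝓝 a))
    (hw : Tendsto (fun n : ℕ => (∑ j ∈ Finset.range n, g (w j)) / n) atTop (𝓝 b)) :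
    Tendsto (Vs (fun x y => f x * g y) u w) atTop (𝓝 (a * b)) := by
  have h1 : Tendsto (fun p : ℕ × ℕ =>
      ((∑ i ∈ Finset.range p.1, f (u i)) / p.1) * ((∑ j ∈ Finset.range p.2, g (w j)) / p.2))
      atTop (𝓝 (a * b)) := (hu.comp tendsto_fst_nat).mul (hw.comp tendsto_snd_nat)
  refine h1.congr fun p => ?_
  unfold Vs
  rw [div_mul_div_comm, Finset.sum_mul_sum]

lemma avg_const_mul {u : ℕ → ℝ} {f : ℝ → ℝ} (c : ℝ) {A : ℝ}
    (h : Tendsto (fun n : ℕ => (∑ i ∈ Finset.range n, f (u i)) / n) atTop (𝓝 A)) :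
    Tendsto (fun n : ℕ => (∑ i ∈ Finset.range n, c * f (u i)) / n) atTop (𝓝 (c * A)) := by
  have h2 := h.const_mul c
  refine h2.congr fun n => ?_
  rw [← Finset.mul_sum, mul_div_assoc]

lemma avg_const (c : ℝ) (u : ℕ → ℝ) :
    Tendsto (fun n : ℕ => (∑ _i ∈ Finset.range n, c) / n) atTop (𝓝 c) := by
  have h : ∀ᶠ n : ℕ in atTop, c = (∑ _i ∈ Finset.range n, c) / n := by
    filter_upwards [eventually_ge_atTop 1] with n hn
    have hn' : (n:ℝ) ≠ 0 := by positivity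
    rw [Finset.sum_const, Finset.card_range, nsmul_eq_mul]
    field_simp
  exact Tendsto.congr' h tendsto_const_nhds

lemma Vs_finsum_tendsto {ι : Type*} (s : Finset ι) (F G : ι → ℝ → ℝ) (u w : ℕ → ℝ)
    (L1 L2 : ι → ℝ)
    (hF : ∀ k ∈ s, Tendsto (fun n : ℕ => (∑ i ∈ Finset.range n, F k (u i)) / n) atTop (𝓝 (L1 k)))
    (hG : ∀ k ∈ s, Tendsto (fun n : ℕ => (∑ j ∈ Finset.range n, G k (w j)) / n) atTop (𝓝 (L2 k))) :
    Tendsto (Vs (fun x y => ∑ k ∈ s, F k x * G k y) u w) atTop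
      (𝓝 (∑ k ∈ s, L1 k * L2 k)) := by
  have h1 : Tendsto (fun p : ℕ × ℕ => ∑ k ∈ s, Vs (fun x y => F k x * G k y) u w p) atTop
      (𝓝 (∑ k ∈ s, L1 k * L2 k)) :=
    tendsto_finset_sum s fun k hk => Vs_prod_tendsto (hF k hk) (hG k hk)
  refine h1.congr fun p => (Vs_sum s F G u w p).symm

lemma Vs_abs_diff_le {f g B : ℝ → ℝ → ℝ} (h : ∀ x y, |f x y - g x y| ≤ B x y)
    (u w : ℕ → ℝ) (p : ℕ × ℕ) :
    |Vs f u w p - Vs g u w p| ≤ Vs B u w p := by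
  unfold Vs
  rw [div_sub_div_same, abs_div, abs_of_nonneg (by positivity : (0:ℝ) ≤ (p.1 : ℝ) * p.2)]
  have hnum : |∑ i ∈ Finset.range p.1, ∑ j ∈ Finset.range p.2, f (u i) (w j)
      - ∑ i ∈ Finset.range p.1, ∑ j ∈ Finset.range p.2, g (u i) (w j)|
      ≤ ∑ i ∈ Finset.range p.1, ∑ j ∈ Finset.range p.2, B (u i) (w j) := by
    rw [← Finset.sum_sub_distrib]
    refine (Finset.abs_sum_le_sum_abs _ _).trans (Finset.sum_le_sum fun i _ => ?_)
    rw [← Finset.sum_sub_distrib]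
    exact (Finset.abs_sum_le_sum_abs _ _).trans (Finset.sum_le_sum fun j _ => h _ _)
  rw [div_eq_mul_inv, div_eq_mul_inv]
  exact mul_le_mul_of_nonneg_right hnum (by positivity)

lemma Vs_diff_le_const {f g : ℝ → ℝ → ℝ} {c : ℝ} (h : ∀ x y, |f x y - g x y| ≤ c)
    (u w : ℕ → ℝ) (p : ℕ × ℕ) (h1 : 1 ≤ p.1) (h2 : 1 ≤ p.2) :
    |Vs f u w p - Vs g u w p| ≤ c := by
  refine (Vs_abs_diff_le (B := fun _ _ => c) h u w p).trans ?_
  unfold Vs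
  have hp1 : (0:ℝ) < p.1 := by exact_mod_cast h1
  have hp2 : (0:ℝ) < p.2 := by exact_mod_cast h2
  rw [Finset.sum_const, Finset.card_range]
  simp only [Finset.sum_const, Finset.card_range, nsmul_eq_mul]
  rw [div_le_iff₀ (by positivity)]
  exact le_of_eq (by ring)

lemma abs_integral_sub_le {γ : Type*} [MeasurableSpace γ] {ν : Measure γ} {f g B : γ → ℝ}
    (hf : Integrable f ν) (hg : Integrable g ν) (hB : Integrable B ν)
    (h : ∀ a, |f a - g a| ≤ B a) :
    |∫ a, f a ∂ν - ∫ a, g a ∂ν| ≤ ∫ a, B a ∂ν := by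
  rw [← integral_sub hf hg]
  have h1 : |∫ a, (f a - g a) ∂ν| ≤ ∫ a, |f a - g a| ∂ν := by
    simpa [Real.norm_eq_abs] using norm_integral_le_integral_norm (μ := ν) (fun a => f a - g a)
  exact h1.trans (integral_mono (hf.sub hg).abs hB h)

lemma abs_integral_sub_le_const {γ : Type*} [MeasurableSpace γ] {ν : Measure γ}
    [IsProbabilityMeasure ν] {f g : γ → ℝ} {c : ℝ}
    (hf : Integrable f ν) (hg : Integrable g ν) (h : ∀ a, |f a - g a| ≤ c) :
    |∫ a, f a ∂ν - ∫ a, g a ∂ν| ≤ c := by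
  have := abs_integral_sub_le hf hg (integrable_const c) h
  simpa using this

lemma integrable_of_bounded {γ : Type*} [MeasurableSpace γ] {ν : Measure γ} [IsFiniteMeasure ν]
    {f : γ → ℝ} (hm : AEStronglyMeasurable f ν) {C : ℝ} (h : ∀ a, |f a| ≤ C) :
    Integrable f ν :=
  Integrable.mono' (integrable_const C) hm (Filter.Eventually.of_forall
    (by simpa [Real.norm_eq_abs] using h))

lemma abs_integral_le_of_bounded {γ : Type*} [MeasurableSpace γ] {ν : Measure γ}
    [IsProbabilityMeasure ν] {f : γ → ℝ} {C : ℝ}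
    (h : ∀ a, |f a| ≤ C) (hint : Integrable f ν) :
    |∫ a, f a ∂ν| ≤ C := by
  have h1 : |∫ a, f a ∂ν| ≤ ∫ a, |f a| ∂ν := by
    simpa [Real.norm_eq_abs] using norm_integral_le_integral_norm (μ := ν) f
  refine h1.trans ?_
  have := integral_mono hint.abs (integrable_const C) h
  simpa using this

lemma abs_integral_le_integral_of_le {γ : Type*} [MeasurableSpace γ] {ν : Measure γ}
    {f B : γ → ℝ} (h : ∀ a, |f a| ≤ B a) (hint : Integrable f ν) (hB : Integrable B ν) :
    |∫ a, f a ∂ν| ≤ ∫ a, B a ∂ν := by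
  have h1 : |∫ a, f a ∂ν| ≤ ∫ a, |f a| ∂ν := by
    simpa [Real.norm_eq_abs] using norm_integral_le_integral_norm (μ := ν) f
  exact h1.trans (integral_mono hint.abs hB h)

lemma iint_finsum {ι : Type*} (lam rho : Measure ℝ) [IsProbabilityMeasure lam]
    [IsProbabilityMeasure rho] (s : Finset ι) (F G : ι → ℝ → ℝ)
    (hF : ∀ k ∈ s, Integrable (F k) lam) (hG : ∀ k ∈ s, Integrable (G k) rho) :
    ∫ x, ∫ y, (∑ k ∈ s, F k x * G k y) ∂rho ∂lam
      = ∑ k ∈ s, (∫ x, F k x ∂lam) * (∫ y, G k y ∂rho) := by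
  have hinner : ∀ x, ∫ y, (∑ k ∈ s, F k x * G k y) ∂rho
      = ∑ k ∈ s, F k x * ∫ y, G k y ∂rho := by
    intro x
    rw [integral_finset_sum s (fun k hk => (hG k hk).const_mul (F k x))]
    exact Finset.sum_congr rfl fun k hk => integral_const_mul _ _
  simp_rw [hinner]
  rw [integral_finset_sum s (fun k hk => (hF k hk).mul_const _)]
  exact Finset.sum_congr rfl fun k hk => integral_mul_const _ _

/-! ### Dominated convergence for truncation errors -/

lemma eIb_eventually_zero (x : ℝ) : ∀ᶠ M : ℕ in atTop, eIb M x = 0 := by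
  filter_upwards [eventually_ge_atTop ⌈|x|⌉₊] with M hM
  have h : |x| ≤ (M:ℝ) := (Nat.le_ceil _).trans (by exact_mod_cast hM)
  exact if_neg (not_lt.2 h)

lemma abs_mul_eIb_le {α : ℝ} (M : ℕ) (x : ℝ) : |(|x| ^ α * eIb M x)| ≤ |x| ^ α := by
  rw [abs_of_nonneg (mul_nonneg (Real.rpow_nonneg (abs_nonneg _) _) (eIb_nonneg M x))]
  exact mul_le_of_le_one_right (Real.rpow_nonneg (abs_nonneg _) _) (eIb_le_one M x)

lemma tendsto_int_xe {α : ℝ} (hα : 0 < α) (ν : Measure ℝ) [IsProbabilityMeasure ν]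
    (hmom : Integrable (fun x => |x| ^ α) ν) :
    Tendsto (fun M : ℕ => ∫ x, |x| ^ α * eIb M x ∂ν) atTop (𝓝 0) := by
  have mα : Measurable fun x : ℝ => |x| ^ α := (continuous_absRpow hα).measurable
  have := tendsto_integral_of_dominated_convergence (μ := ν)
    (F := fun M x => |x| ^ α * eIb M x) (f := fun _ => (0:ℝ)) (bound := fun x => |x| ^ α)
    (fun M => (mα.mul (measurable_eIb M)).aestronglyMeasurable)
    hmom
    (fun M => Filter.Eventually.of_forall fun x => by
      rw [Real.norm_eq_abs]; exact abs_mul_eIb_le (α := α) M x)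
    (Filter.Eventually.of_forall fun x => by
      refine Tendsto.congr' ?_ tendsto_const_nhds
      filter_upwards [eIb_eventually_zero x] with M hM
      rw [hM, mul_zero])
  simpa using this

lemma tendsto_int_e (ν : Measure ℝ) [IsProbabilityMeasure ν] :
    Tendsto (fun M : ℕ => ∫ x, eIb M x ∂ν) atTop (𝓝 0) := by
  have := tendsto_integral_of_dominated_convergence (μ := ν)
    (F := fun M x => eIb M x) (f := fun _ => (0:ℝ)) (bound := fun _ => (1:ℝ))
    (fun M => (measurable_eIb M).aestronglyMeasurable)
    (integrable_const 1)
    (fun M => Filter.Eventually.of_forall fun x => by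
      rw [Real.norm_eq_abs, abs_of_nonneg (eIb_nonneg M x)]; exact eIb_le_one M x)
    (Filter.Eventually.of_forall fun x => by
      refine Tendsto.congr' ?_ tendsto_const_nhds
      filter_upwards [eIb_eventually_zero x] with M hM
      rw [hM])
  simpa using this

/-! ### The four product kernels dominating the truncation error -/

/-- The four product kernel components. -/
def F4 (α : ℝ) (M k : ℕ) : ℝ → ℝ :=
  match k with
  | 0 => fun x => 2 ^ (α + 1) * (|x| ^ α * eIb M x)
  | 1 => fun x => 2 ^ (α + 1) * |x| ^ α
  | 2 => fun x => 2 ^ (α + 1) * eIb M x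
  | 3 => fun _ => 2 ^ (α + 1)
  | _ + 4 => fun _ => 0

def G4 (α : ℝ) (M k : ℕ) : ℝ → ℝ :=
  match k with
  | 0 => fun _ => 1
  | 1 => fun y => eIb M y
  | 2 => fun y => |y| ^ α
  | 3 => fun y => |y| ^ α * eIb M y
  | _ + 4 => fun _ => 0

lemma B4_eq (α : ℝ) (M : ℕ) (x y : ℝ) :
    2 ^ (α + 1) * ((|x| ^ α + |y| ^ α) * (eIb M x + eIb M y))
      = ∑ k ∈ Finset.range 4, F4 α M k x * G4 α M k y := by
  simp only [Finset.sum_range_succ, Finset.sum_range_zero, F4, G4]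
  ring

lemma measurable_F4 {α : ℝ} (hα : 0 < α) (M k : ℕ) : Measurable (F4 α M k) := by
  have mα : Measurable fun x : ℝ => |x| ^ α := (continuous_absRpow hα).measurable
  match k with
  | 0 => exact (mα.mul (measurable_eIb M)).const_mul _
  | 1 => exact mα.const_mul _
  | 2 => exact (measurable_eIb M).const_mul _
  | 3 => exact measurable_const
  | (n + 4) => exact measurable_const

lemma measurable_G4 {α : ℝ} (hα : 0 < α) (M k : ℕ) : Measurable (G4 α M k) := by
  have mα : Measurable fun x : ℝ => |x| ^ α := (continuous_absRpow hα).measurable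
  match k with
  | 0 => exact measurable_const
  | 1 => exact measurable_eIb M
  | 2 => exact mα
  | 3 => exact mα.mul (measurable_eIb M)
  | (n + 4) => exact measurable_const

lemma integrable_xe {α : ℝ} (hα : 0 < α) (M : ℕ) (ν : Measure ℝ) [IsProbabilityMeasure ν]
    (hmom : Integrable (fun x => |x| ^ α) ν) :
    Integrable (fun x => |x| ^ α * eIb M x) ν := by
  refine Integrable.mono' hmom
    (((continuous_absRpow hα).measurable.mul (measurable_eIb M)).aestronglyMeasurable)
    (Filter.Eventually.of_forall fun x => ?_)
  rw [Real.norm_eq_abs]; exact abs_mul_eIb_le (α := α) M x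

lemma integrable_e (M : ℕ) (ν : Measure ℝ) [IsProbabilityMeasure ν] :
    Integrable (eIb M) ν :=
  integrable_of_bounded (measurable_eIb M).aestronglyMeasurable
    (fun x => by rw [abs_of_nonneg (eIb_nonneg M x)]; exact eIb_le_one M x)

lemma integrable_F4 {α : ℝ} (hα : 0 < α) (M k : ℕ) (ν : Measure ℝ) [IsProbabilityMeasure ν]
    (hmom : Integrable (fun x => |x| ^ α) ν) : Integrable (F4 α M k) ν := by
  match k with
  | 0 => exact (integrable_xe hα M ν hmom).const_mul _
  | 1 => exact hmom.const_mul _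
  | 2 => exact (integrable_e M ν).const_mul _
  | 3 => exact integrable_const _
  | (n + 4) => exact integrable_const 0

lemma integrable_G4 {α : ℝ} (hα : 0 < α) (M k : ℕ) (ν : Measure ℝ) [IsProbabilityMeasure ν]
    (hmom : Integrable (fun x => |x| ^ α) ν) : Integrable (G4 α M k) ν := by
  match k with
  | 0 => exact integrable_const _
  | 1 => exact integrable_e M ν
  | 2 => exact hmom
  | 3 => exact integrable_xe hα M ν hmom
  | (n + 4) => exact integrable_const 0

/-- The truncation error term (as a function of the truncation level `M`). -/
def errT (α : ℝ) (lam rho : Measure ℝ) (M : ℕ) : ℝ :=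
  ∑ k ∈ Finset.range 4, (∫ x, F4 α M k x ∂lam) * (∫ y, G4 α M k y ∂rho)

lemma errT_def (α : ℝ) (lam rho : Measure ℝ) (M : ℕ) :
    errT α lam rho M
      = ∑ k ∈ Finset.range 4, (∫ x, F4 α M k x ∂lam) * (∫ y, G4 α M k y ∂rho) := rfl

lemma tendsto_errT {α : ℝ} (hα : 0 < α) (lam rho : Measure ℝ)
    [IsProbabilityMeasure lam] [IsProbabilityMeasure rho]
    (hlam : Integrable (fun x => |x| ^ α) lam) (hrho : Integrable (fun x => |x| ^ α) rho) :
    Tendsto (errT α lam rho) atTop (𝓝 0) := by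
  have heq : ∀ M, errT α lam rho M
      = 2 ^ (α + 1) * ((∫ x, |x| ^ α * eIb M x ∂lam) * 1
        + (∫ x, |x| ^ α ∂lam) * (∫ y, eIb M y ∂rho)
        + (∫ x, eIb M x ∂lam) * (∫ y, |y| ^ α ∂rho)
        + 1 * (∫ y, |y| ^ α * eIb M y ∂rho)) := by
    intro M
    simp only [errT, Finset.sum_range_succ, Finset.sum_range_zero, F4, G4,
      integral_const_mul, integral_const, measure_univ, ENNReal.toReal_one, probReal_univ, smul_eq_mul]
    ring
  have h1 := tendsto_int_xe hα lam hlam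
  have h2 := tendsto_int_e rho
  have h3 := tendsto_int_e lam
  have h4 := tendsto_int_xe hα rho hrho
  have hcomb : Tendsto (fun M : ℕ => 2 ^ (α + 1) * ((∫ x, |x| ^ α * eIb M x ∂lam) * 1
        + (∫ x, |x| ^ α ∂lam) * (∫ y, eIb M y ∂rho)
        + (∫ x, eIb M x ∂lam) * (∫ y, |y| ^ α ∂rho)
        + 1 * (∫ y, |y| ^ α * eIb M y ∂rho))) atTop
      (𝓝 (2 ^ (α + 1) * ((0:ℝ) * 1 + (∫ x, |x| ^ α ∂lam) * 0
        + 0 * (∫ y, |y| ^ α ∂rho) + 1 * 0))) :=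
    ((((h1.mul_const 1).add (tendsto_const_nhds.mul h2)).add
      (h3.mul_const _)).add (tendsto_const_nhds.mul h4)).const_mul _
  have hz : (2:ℝ) ^ (α + 1) * ((0:ℝ) * 1 + (∫ x, |x| ^ α ∂lam) * 0
      + 0 * (∫ y, |y| ^ α ∂rho) + 1 * 0) = 0 := by ring
  rw [hz] at hcomb
  exact Tendsto.congr (fun M => (heq M).symm) hcomb

/-! ### Deterministic core: convergence of the V-statistic given convergence of averages -/

set_option maxHeartbeats 1000000 in
theorem det_main {α : ℝ} (hα : 0 < α)
    (lam rho : Measure ℝ) [IsProbabilityMeasure lam] [IsProbabilityMeasure rho]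
    (hlam : Integrable (fun x => |x| ^ α) lam) (hrho : Integrable (fun x => |x| ^ α) rho)
    (u w : ℕ → ℝ)
    (H1u : Tendsto (fun n : ℕ => (∑ i ∈ Finset.range n, |u i| ^ α) / n) atTop
      (𝓝 (∫ x, |x| ^ α ∂lam)))
    (H2u : ∀ M : ℕ, Tendsto (fun n : ℕ => (∑ i ∈ Finset.range n, |u i| ^ α * eIb M (u i)) / n)
      atTop (𝓝 (∫ x, |x| ^ α * eIb M x ∂lam)))
    (H3u : ∀ M : ℕ, Tendsto (fun n : ℕ => (∑ i ∈ Finset.range n, eIb M (u i)) / n) atTop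
      (𝓝 (∫ x, eIb M x ∂lam)))
    (H4u : ∀ M a : ℕ, Tendsto (fun n : ℕ => (∑ i ∈ Finset.range n, (clampR M (u i)) ^ a) / n)
      atTop (𝓝 (∫ x, (clampR M x) ^ a ∂lam)))
    (H1w : Tendsto (fun n : ℕ => (∑ j ∈ Finset.range n, |w j| ^ α) / n) atTop
      (𝓝 (∫ y, |y| ^ α ∂rho)))
    (H2w : ∀ M : ℕ, Tendsto (fun n : ℕ => (∑ j ∈ Finset.range n, |w j| ^ α * eIb M (w j)) / n)
      atTop (𝓝 (∫ y, |y| ^ α * eIb M y ∂rho)))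
    (H3w : ∀ M : ℕ, Tendsto (fun n : ℕ => (∑ j ∈ Finset.range n, eIb M (w j)) / n) atTop
      (𝓝 (∫ y, eIb M y ∂rho)))
    (H4w : ∀ M a : ℕ, Tendsto (fun n : ℕ => (∑ j ∈ Finset.range n, (clampR M (w j)) ^ a) / n)
      atTop (𝓝 (∫ y, (clampR M y) ^ a ∂rho))) :
    Tendsto (Vs (fun x y => |x - y| ^ α) u w) atTop
      (𝓝 (∫ x, ∫ y, |x - y| ^ α ∂rho ∂lam)) := by
  have mα : Measurable fun x : ℝ => |x| ^ α := (continuous_absRpow hα).measurable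
  set L : ℝ := ∫ x, ∫ y, |x - y| ^ α ∂rho ∂lam with hL
  rw [Metric.tendsto_nhds]
  intro ε hε
  set ε8 : ℝ := ε / 8 with hε8def
  have hε8 : 0 < ε8 := by positivity
  -- choose the truncation level M
  obtain ⟨M, hM⟩ : ∃ M : ℕ, errT α lam rho M < ε8 :=
    ((tendsto_order.1 (tendsto_errT hα lam rho hlam hrho)).2 ε8 hε8).exists
  -- choose the approximating polynomial
  obtain ⟨q, hq⟩ := exists_polynomial_near_of_continuousOn (-(2*(M:ℝ))) (2*(M:ℝ))
    (fun t => |t| ^ α) (continuous_absRpow hα).continuousOn ε8 hε8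
  -- kernels
  set h0 : ℝ → ℝ → ℝ := fun x y => |x - y| ^ α with hh0
  set hT : ℝ → ℝ → ℝ := fun x y => |clampR M x - clampR M y| ^ α with hhT
  set Kq : ℝ → ℝ → ℝ := fun x y => Polynomial.eval (clampR M x - clampR M y) q with hKq
  set CT : ℝ := (2*(M:ℝ)) ^ α with hCT
  have habs2M : ∀ x y, |clampR M x - clampR M y| ≤ 2*(M:ℝ) := by
    intro x y
    have h1 := abs_clampR_le M x
    have h2 := abs_clampR_le M y
    have h3 : |clampR M x - clampR M y| ≤ |clampR M x| + |clampR M y| := by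
      simpa [sub_eq_add_neg, abs_neg] using abs_add_le (clampR M x) (-(clampR M y))
    linarith
  have hmem : ∀ x y, clampR M x - clampR M y ∈ Set.Icc (-(2*(M:ℝ))) (2*(M:ℝ)) := by
    intro x y
    rcases abs_le.1 (habs2M x y) with ⟨l, r⟩
    exact ⟨l, r⟩
  have hqbound : ∀ x y, |hT x y - Kq x y| ≤ ε8 := by
    intro x y
    have := hq _ (hmem x y)
    rw [abs_sub_comm] at this
    exact this.le
  have hTbound : ∀ x y, |hT x y| ≤ CT := by
    intro x y
    rw [abs_of_nonneg (Real.rpow_nonneg (abs_nonneg _) _)]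
    exact Real.rpow_le_rpow (abs_nonneg _) (habs2M x y) hα.le
  have hKbound : ∀ x y, |Kq x y| ≤ CT + ε8 := by
    intro x y
    have h1 := hqbound x y
    have h2 := hTbound x y
    calc |Kq x y| = |hT x y - (hT x y - Kq x y)| := by ring_nf
      _ ≤ |hT x y| + |hT x y - Kq x y| := by
          refine (abs_sub _ _).trans ?_
          simp [abs_abs]
      _ ≤ CT + ε8 := add_le_add h2 h1
  -- the bounding kernel and its limit
  have htruncB : ∀ x y, |h0 x y - hT x y| ≤ ∑ k ∈ Finset.range 4, F4 α M k x * G4 α M k y :=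
    fun x y => (trunc_diff_bound hα M x y).trans (le_of_eq (B4_eq α M x y))
  have hF4avg : ∀ k ∈ Finset.range 4, Tendsto
      (fun n : ℕ => (∑ i ∈ Finset.range n, F4 α M k (u i)) / n) atTop
      (𝓝 (∫ x, F4 α M k x ∂lam)) := by
    intro k hk
    have hk4 : k < 4 := Finset.mem_range.1 hk
    interval_cases k
    · simpa only [F4, integral_const_mul] using
        avg_const_mul (u := u) (f := fun x => |x| ^ α * eIb M x) (2 ^ (α+1)) (H2u M)
    · simpa only [F4, integral_const_mul] using
        avg_const_mul (u := u) (f := fun x => |x| ^ α) (2 ^ (α+1)) H1u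
    · simpa only [F4, integral_const_mul] using
        avg_const_mul (u := u) (f := fun x => eIb M x) (2 ^ (α+1)) (H3u M)
    · simpa only [F4, integral_const, measure_univ, ENNReal.toReal_one, probReal_univ, one_smul]
        using avg_const (2 ^ (α+1) : ℝ) u
  have hG4avg : ∀ k ∈ Finset.range 4, Tendsto
      (fun n : ℕ => (∑ j ∈ Finset.range n, G4 α M k (w j)) / n) atTop
      (𝓝 (∫ y, G4 α M k y ∂rho)) := by
    intro k hk
    have hk4 : k < 4 := Finset.mem_range.1 hk
    interval_cases k
    · simpa only [G4, integral_const, measure_univ, ENNReal.toReal_one, probReal_univ, one_smul]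
        using avg_const (1 : ℝ) w
    · exact H3w M
    · exact H1w
    · exact H2w M
  have hVsB : Tendsto (Vs (fun x y => ∑ k ∈ Finset.range 4, F4 α M k x * G4 α M k y) u w) atTop
      (𝓝 (errT α lam rho M)) := by
    rw [errT_def]
    exact Vs_finsum_tendsto (Finset.range 4) (F4 α M) (G4 α M) u w
      (fun k => ∫ x, F4 α M k x ∂lam) (fun k => ∫ y, G4 α M k y ∂rho) hF4avg hG4avg
  have evB : ∀ᶠ p : ℕ × ℕ in atTop,
      Vs (fun x y => ∑ k ∈ Finset.range 4, F4 α M k x * G4 α M k y) u w p < 2 * ε8 :=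
    (tendsto_order.1 hVsB).2 (2 * ε8) (by linarith)
  -- polynomial kernel as a finite sum of products
  set S : Finset ((_ : ℕ) × ℕ) := q.support.sigma (fun k => Finset.range (k+1)) with hS
  set FP : (Σ _ : ℕ, ℕ) → ℝ → ℝ := fun kk x =>
    (q.coeff kk.1 * (kk.1.choose kk.2) * (-1:ℝ) ^ (kk.1 - kk.2)) * (clampR M x) ^ kk.2 with hFP
  set GP : (Σ _ : ℕ, ℕ) → ℝ → ℝ := fun kk y => (clampR M y) ^ (kk.1 - kk.2) with hGP
  have hKsum : ∀ x y, Kq x y = ∑ kk ∈ S, FP kk x * GP kk y := by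
    intro x y
    have hds : ∑ k ∈ q.support, ∑ i ∈ Finset.range (k+1),
        (FP ⟨k, i⟩ x * GP ⟨k, i⟩ y) = ∑ kk ∈ S, FP kk x * GP kk y :=
      Finset.sum_sigma' _ _ _
    rw [← hds]
    show Polynomial.eval (clampR M x - clampR M y) q = _
    rw [Polynomial.eval_eq_sum, Polynomial.sum_def]
    refine Finset.sum_congr rfl fun k _ => ?_
    rw [sub_eq_add_neg, add_pow, Finset.mul_sum]
    refine Finset.sum_congr rfl fun i _ => ?_
    simp only [hFP, hGP]
    rw [neg_pow]
    ring
  set IK : ℝ := ∑ kk ∈ S, (∫ x, FP kk x ∂lam) * (∫ y, GP kk y ∂rho) with hIK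
  have mclamp : ∀ a : ℕ, Measurable fun x : ℝ => (clampR M x) ^ a :=
    fun a => ((continuous_clampR M).pow a).measurable
  have hFPb : ∀ kk (x : ℝ), |FP kk x| ≤
      |q.coeff kk.1 * (kk.1.choose kk.2) * (-1:ℝ) ^ (kk.1 - kk.2)| * (M:ℝ) ^ kk.2 := by
    intro kk x
    rw [hFP, abs_mul]
    refine mul_le_mul_of_nonneg_left ?_ (abs_nonneg _)
    rw [abs_pow]
    exact pow_le_pow_left₀ (abs_nonneg _) (abs_clampR_le M x) _
  have hGPb : ∀ kk (y : ℝ), |GP kk y| ≤ (M:ℝ) ^ (kk.1 - kk.2) := by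
    intro kk y
    rw [hGP, abs_pow]
    exact pow_le_pow_left₀ (abs_nonneg _) (abs_clampR_le M y) _
  have hFPint : ∀ kk ∈ S, Integrable (FP kk) lam := fun kk _ =>
    integrable_of_bounded (((mclamp kk.2).const_mul _).aestronglyMeasurable) (hFPb kk)
  have hGPint : ∀ kk ∈ S, Integrable (GP kk) rho := fun kk _ =>
    integrable_of_bounded ((mclamp _).aestronglyMeasurable) (hGPb kk)
  have hVsK : Tendsto (Vs Kq u w) atTop (𝓝 IK) := by
    have h0' : Tendsto (Vs (fun x y => ∑ kk ∈ S, FP kk x * GP kk y) u w) atTop (𝓝 IK) := by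
      refine Vs_finsum_tendsto _ _ _ u w _ _ ?_ ?_
      · intro kk _
        simpa only [hFP, integral_const_mul] using
          avg_const_mul (u := u) (f := fun x => (clampR M x) ^ kk.2)
            (q.coeff kk.1 * (kk.1.choose kk.2) * (-1:ℝ) ^ (kk.1 - kk.2)) (H4u M kk.2)
      · intro kk _
        exact H4w M (kk.1 - kk.2)
    refine h0'.congr fun p => ?_
    exact Vs_congr (fun x y => (hKsum x y).symm) u w p
  have evK : ∀ᶠ p : ℕ × ℕ in atTop, |Vs Kq u w p - IK| < ε8 := by
    have := Metric.tendsto_nhds.mp hVsK ε8 hε8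
    filter_upwards [this] with p hp
    rwa [Real.dist_eq] at hp
  -- inner integrability
  have mh0y : ∀ x, Continuous fun y : ℝ => |x - y| ^ α :=
    fun x => ((continuous_const.sub continuous_id).abs).rpow_const fun _ => Or.inr hα.le
  have ih_inner : ∀ x, Integrable (fun y => h0 x y) rho := by
    intro x
    refine Integrable.mono' (((integrable_const (|x| ^ α)).add hrho).const_mul (2 ^ α))
      (mh0y x).aestronglyMeasurable (Filter.Eventually.of_forall fun y => ?_)
    rw [Real.norm_eq_abs, abs_of_nonneg (Real.rpow_nonneg (abs_nonneg _) _)]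
    exact rpow_abs_sub_le hα x y
  have mhTy : ∀ x, Continuous fun y : ℝ => hT x y := fun x =>
    ((continuous_const.sub (continuous_clampR M)).abs).rpow_const fun _ => Or.inr hα.le
  have ihT_inner : ∀ x, Integrable (fun y => hT x y) rho :=
    fun x => integrable_of_bounded (mhTy x).aestronglyMeasurable (hTbound x)
  have mKy : ∀ x, Continuous fun y : ℝ => Kq x y := fun x =>
    q.continuous.comp (continuous_const.sub (continuous_clampR M))
  have iK_inner : ∀ x, Integrable (fun y => Kq x y) rho :=
    fun x => integrable_of_bounded (mKy x).aestronglyMeasurable (hKbound x)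
  have iB_inner : ∀ x, Integrable (fun y => ∑ k ∈ Finset.range 4, F4 α M k x * G4 α M k y) rho :=
    fun x => integrable_finset_sum _ fun k _ => (integrable_G4 hα M k rho hrho).const_mul _
  -- outer functions
  set Fh : ℝ → ℝ := fun x => ∫ y, h0 x y ∂rho with hFh
  set FT : ℝ → ℝ := fun x => ∫ y, hT x y ∂rho with hFT
  set FK : ℝ → ℝ := fun x => ∫ y, Kq x y ∂rho with hFK
  set FB : ℝ → ℝ := fun x => ∫ y, (∑ k ∈ Finset.range 4, F4 α M k x * G4 α M k y) ∂rho with hFB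
  have mFh : AEStronglyMeasurable Fh lam := by
    have hc : Continuous fun z : ℝ × ℝ => |z.1 - z.2| ^ α :=
      ((continuous_fst.sub continuous_snd).abs).rpow_const fun _ => Or.inr hα.le
    exact (StronglyMeasurable.integral_prod_right'
      (f := fun z : ℝ × ℝ => |z.1 - z.2| ^ α) hc.stronglyMeasurable).aestronglyMeasurable
  have mFT : AEStronglyMeasurable FT lam := by
    have hc : Continuous fun z : ℝ × ℝ => |clampR M z.1 - clampR M z.2| ^ α :=
      ((((continuous_clampR M).comp continuous_fst).sub
        ((continuous_clampR M).comp continuous_snd)).abs).rpow_const fun _ => Or.inr hα.le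
    exact (StronglyMeasurable.integral_prod_right'
      (f := fun z : ℝ × ℝ => |clampR M z.1 - clampR M z.2| ^ α)
      hc.stronglyMeasurable).aestronglyMeasurable
  have mFK : AEStronglyMeasurable FK lam := by
    have hc : Continuous fun z : ℝ × ℝ => Polynomial.eval (clampR M z.1 - clampR M z.2) q :=
      q.continuous.comp (((continuous_clampR M).comp continuous_fst).sub
        ((continuous_clampR M).comp continuous_snd))
    exact (StronglyMeasurable.integral_prod_right'
      (f := fun z : ℝ × ℝ => Polynomial.eval (clampR M z.1 - clampR M z.2) q)
      hc.stronglyMeasurable).aestronglyMeasurable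
  have mFB : AEStronglyMeasurable FB lam := by
    have hm : Measurable fun z : ℝ × ℝ => ∑ k ∈ Finset.range 4, F4 α M k z.1 * G4 α M k z.2 :=
      Finset.measurable_sum _ fun k _ =>
        ((measurable_F4 hα M k).comp measurable_fst).mul
          ((measurable_G4 hα M k).comp measurable_snd)
    exact (StronglyMeasurable.integral_prod_right'
      (f := fun z : ℝ × ℝ => ∑ k ∈ Finset.range 4, F4 α M k z.1 * G4 α M k z.2)
      hm.stronglyMeasurable).aestronglyMeasurable
  have iFT : Integrable FT lam :=
    integrable_of_bounded mFT fun x => abs_integral_le_of_bounded (hTbound x) (ihT_inner x)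
  have iFK : Integrable FK lam :=
    integrable_of_bounded mFK fun x => abs_integral_le_of_bounded (hKbound x) (iK_inner x)
  set ER : ℝ := ∫ y, |y| ^ α ∂rho with hER
  have iFh : Integrable Fh lam := by
    refine Integrable.mono' ((hlam.add (integrable_const ER)).const_mul (2 ^ α)) mFh
      (Filter.Eventually.of_forall fun x => ?_)
    rw [Real.norm_eq_abs]
    have h1 : |Fh x| ≤ ∫ y, 2 ^ α * (|x| ^ α + |y| ^ α) ∂rho := by
      refine abs_integral_le_integral_of_le (fun y => ?_) (ih_inner x)
        (((integrable_const (|x| ^ α)).add hrho).const_mul (2 ^ α))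
      rw [abs_of_nonneg (Real.rpow_nonneg (abs_nonneg _) _)]
      exact rpow_abs_sub_le hα x y
    refine h1.trans (le_of_eq ?_)
    rw [integral_const_mul, integral_add (integrable_const _) hrho, integral_const]
    simp [measure_univ, hER]
  have hFBeq : ∀ x, FB x = ∑ k ∈ Finset.range 4, F4 α M k x * ∫ y, G4 α M k y ∂rho := by
    intro x
    show ∫ y, (∑ k ∈ Finset.range 4, F4 α M k x * G4 α M k y) ∂rho = _
    rw [integral_finset_sum _ (fun k _ => (integrable_G4 hα M k rho hrho).const_mul _)]
    exact Finset.sum_congr rfl fun k _ => integral_const_mul _ _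
  have iFB : Integrable FB lam := by
    refine (integrable_finset_sum (μ := lam) (Finset.range 4)
      (f := fun k x => F4 α M k x * ∫ y, G4 α M k y ∂rho)
      (fun k _ => (integrable_F4 hα M k lam hlam).mul_const _)).congr ?_
    exact Filter.Eventually.of_forall fun x => (hFBeq x).symm
  -- integral-side bounds
  have hIKeq : IK = ∫ x, FK x ∂lam := by
    rw [hIK, ← iint_finsum lam rho S FP GP hFPint hGPint]
    refine integral_congr_ae (Filter.Eventually.of_forall fun x => ?_)
    refine integral_congr_ae (Filter.Eventually.of_forall fun y => ?_)
    exact (hKsum x y).symm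
  have E4 : |IK - ∫ x, FT x ∂lam| ≤ ε8 := by
    rw [hIKeq]
    refine abs_integral_sub_le_const iFK iFT fun x => ?_
    refine abs_integral_sub_le_const (iK_inner x) (ihT_inner x) fun y => ?_
    rw [abs_sub_comm]
    exact hqbound x y
  have E5 : |(∫ x, FT x ∂lam) - L| ≤ errT α lam rho M := by
    have hFBint : ∫ x, FB x ∂lam = errT α lam rho M := by
      rw [hFB]
      exact iint_finsum lam rho (Finset.range 4) (F4 α M) (G4 α M)
        (fun k _ => integrable_F4 hα M k lam hlam) (fun k _ => integrable_G4 hα M k rho hrho)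
    rw [← hFBint, hL]
    refine abs_integral_sub_le iFT iFh iFB fun x => ?_
    refine abs_integral_sub_le (ihT_inner x) (ih_inner x) (iB_inner x) fun y => ?_
    rw [abs_sub_comm]
    exact htruncB x y
  -- assemble
  filter_upwards [evB, evK, eventually_ge_atTop ((1,1) : ℕ × ℕ)] with p hpB hpK hp11
  have hn1 : 1 ≤ p.1 := hp11.1
  have hm1 : 1 ≤ p.2 := hp11.2
  have E1 : |Vs h0 u w p - Vs hT u w p| ≤
      Vs (fun x y => ∑ k ∈ Finset.range 4, F4 α M k x * G4 α M k y) u w p :=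
    Vs_abs_diff_le htruncB u w p
  have E2 : |Vs hT u w p - Vs Kq u w p| ≤ ε8 := Vs_diff_le_const hqbound u w p hn1 hm1
  rw [Real.dist_eq]
  have t1 : |Vs h0 u w p - L| ≤ |Vs h0 u w p - Vs hT u w p| + |Vs hT u w p - Vs Kq u w p|
      + |Vs Kq u w p - IK| + |IK - ∫ x, FT x ∂lam| + |(∫ x, FT x ∂lam) - L| := by
    have a1 := abs_sub_le (Vs h0 u w p) (Vs hT u w p) L
    have a2 := abs_sub_le (Vs hT u w p) (Vs Kq u w p) L
    have a3 := abs_sub_le (Vs Kq u w p) IK L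
    have a4 := abs_sub_le IK (∫ x, FT x ∂lam) L
    linarith
  have : |Vs h0 u w p - L| < 6 * ε8 := by linarith
  calc |Vs h0 u w p - L| < 6 * ε8 := this
    _ < ε := by rw [hε8def]; linarith

/-! ### Probabilistic layer -/

variable {Ω : Type*} [MeasurableSpace Ω] {μ : Measure Ω}

lemma slln_comp [IsProbabilityMeasure μ] (Z : ℕ → Ω → ℝ) (hZm : ∀ i, Measurable (Z i))
    (hind : ∀ i j, i ≠ j → IndepFun (Z i) (Z j) μ)
    (lam : Measure ℝ) (hlaw : ∀ i, μ.map (Z i) = lam)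
    (f : ℝ → ℝ) (hf : Measurable f) (hfint : Integrable f lam) :
    ∀ᵐ ω ∂μ, Tendsto (fun n : ℕ => (∑ i ∈ Finset.range n, f (Z i ω)) / n) atTop
      (𝓝 (∫ x, f x ∂lam)) := by
  have h0 : Integrable (fun ω => f (Z 0 ω)) μ := by
    have h1 : Integrable f (μ.map (Z 0)) := by rwa [hlaw 0]
    exact (integrable_map_measure hf.aestronglyMeasurable (hZm 0).aemeasurable).mp h1
  have hident : ∀ i, IdentDistrib (fun ω => f (Z i ω)) (fun ω => f (Z 0 ω)) μ μ := by
    intro i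
    have hZid : IdentDistrib (Z i) (Z 0) μ μ :=
      ⟨(hZm i).aemeasurable, (hZm 0).aemeasurable, by rw [hlaw i, hlaw 0]⟩
    exact hZid.comp hf
  have hpind : Pairwise (Function.onFun (fun g h => IndepFun g h μ) fun i ω => f (Z i ω)) := by
    intro i j hij
    exact (hind i j hij).comp hf hf
  have hsl := strong_law_ae_real (fun i ω => f (Z i ω)) h0 hpind hident
  have hlim : ∫ ω, f (Z 0 ω) ∂μ = ∫ x, f x ∂lam := by
    rw [← hlaw 0, integral_map (hZm 0).aemeasurable hf.aestronglyMeasurable]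
  filter_upwards [hsl] with ω hω
  rwa [hlim] at hω

lemma integrable_clamp_pow (M a : ℕ) (ν : Measure ℝ) [IsProbabilityMeasure ν] :
    Integrable (fun x => (clampR M x) ^ a) ν := by
  refine integrable_of_bounded (((continuous_clampR M).pow a).measurable).aestronglyMeasurable
    (C := (M:ℝ) ^ a) fun x => ?_
  rw [abs_pow]
  exact pow_le_pow_left₀ (abs_nonneg _) (abs_clampR_le M x) _

set_option maxHeartbeats 2000000 in
/-- Almost-sure convergence of the two-sample V-statistic with kernel `|x - y| ^ α`. -/
theorem vstat_ae [IsProbabilityMeasure μ] {α : ℝ} (hα : 0 < α)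
    (Z W : ℕ → Ω → ℝ) (hZm : ∀ i, Measurable (Z i)) (hWm : ∀ j, Measurable (W j))
    (hZind : ∀ i j, i ≠ j → IndepFun (Z i) (Z j) μ)
    (hWind : ∀ i j, i ≠ j → IndepFun (W i) (W j) μ)
    (lam rho : Measure ℝ) [IsProbabilityMeasure lam] [IsProbabilityMeasure rho]
    (hZlaw : ∀ i, μ.map (Z i) = lam) (hWlaw : ∀ j, μ.map (W j) = rho)
    (hlam : Integrable (fun x => |x| ^ α) lam) (hrho : Integrable (fun x => |x| ^ α) rho) :
    ∀ᵐ ω ∂μ, Tendsto (Vs (fun x y => |x - y| ^ α) (fun i => Z i ω) (fun j => W j ω)) atTop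
      (𝓝 (∫ x, ∫ y, |x - y| ^ α ∂rho ∂lam)) := by
  have mα : Measurable fun x : ℝ => |x| ^ α := (continuous_absRpow hα).measurable
  have E1u := slln_comp Z hZm hZind lam hZlaw _ mα hlam
  have E2u : ∀ᵐ ω ∂μ, ∀ M : ℕ, Tendsto
      (fun n : ℕ => (∑ i ∈ Finset.range n, (|Z i ω| ^ α * eIb M (Z i ω))) / n) atTop
      (𝓝 (∫ x, |x| ^ α * eIb M x ∂lam)) :=
    ae_all_iff.2 fun M => slln_comp Z hZm hZind lam hZlaw _
      (mα.mul (measurable_eIb M)) (integrable_xe hα M lam hlam)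
  have E3u : ∀ᵐ ω ∂μ, ∀ M : ℕ, Tendsto
      (fun n : ℕ => (∑ i ∈ Finset.range n, eIb M (Z i ω)) / n) atTop
      (𝓝 (∫ x, eIb M x ∂lam)) :=
    ae_all_iff.2 fun M => slln_comp Z hZm hZind lam hZlaw _
      (measurable_eIb M) (integrable_e M lam)
  have E4u : ∀ᵐ ω ∂μ, ∀ M a : ℕ, Tendsto
      (fun n : ℕ => (∑ i ∈ Finset.range n, (clampR M (Z i ω)) ^ a) / n) atTop
      (𝓝 (∫ x, (clampR M x) ^ a ∂lam)) :=
    ae_all_iff.2 fun M => ae_all_iff.2 fun a => slln_comp Z hZm hZind lam hZlaw _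
      (((continuous_clampR M).pow a).measurable) (integrable_clamp_pow M a lam)
  have E1w := slln_comp W hWm hWind rho hWlaw _ mα hrho
  have E2w : ∀ᵐ ω ∂μ, ∀ M : ℕ, Tendsto
      (fun n : ℕ => (∑ j ∈ Finset.range n, (|W j ω| ^ α * eIb M (W j ω))) / n) atTop
      (𝓝 (∫ y, |y| ^ α * eIb M y ∂rho)) :=
    ae_all_iff.2 fun M => slln_comp W hWm hWind rho hWlaw _
      (mα.mul (measurable_eIb M)) (integrable_xe hα M rho hrho)
  have E3w : ∀ᵐ ω ∂μ, ∀ M : ℕ, Tendsto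
      (fun n : ℕ => (∑ j ∈ Finset.range n, eIb M (W j ω)) / n) atTop
      (𝓝 (∫ y, eIb M y ∂rho)) :=
    ae_all_iff.2 fun M => slln_comp W hWm hWind rho hWlaw _
      (measurable_eIb M) (integrable_e M rho)
  have E4w : ∀ᵐ ω ∂μ, ∀ M a : ℕ, Tendsto
      (fun n : ℕ => (∑ j ∈ Finset.range n, (clampR M (W j ω)) ^ a) / n) atTop
      (𝓝 (∫ y, (clampR M y) ^ a ∂rho)) :=
    ae_all_iff.2 fun M => ae_all_iff.2 fun a => slln_comp W hWm hWind rho hWlaw _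
      (((continuous_clampR M).pow a).measurable) (integrable_clamp_pow M a rho)
  filter_upwards [E1u, E2u, E3u, E4u, E1w, E2w, E3w, E4w] with ω h1u h2u h3u h4u h1w h2w h3w h4w
  exact det_main hα lam rho hlam hrho _ _ h1u h2u h3u h4u h1w h2w h3w h4w

/-! ### One-sample U-statistic normalization -/

lemma offdiag_half (K : ℕ → ℕ → ℝ) (hsymm : ∀ i j, K i j = K j i) (hdiag : ∀ i, K i i = 0)
    (n : ℕ) :
    ∑ i ∈ Finset.range n, ∑ j ∈ Finset.range n, K i j
      = 2 * ∑ i ∈ Finset.range n, ∑ j ∈ Finset.range n, (if i < j then K i j else 0) := by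
  have hpt : ∀ i j, K i j = (if i < j then K i j else 0) + (if j < i then K i j else 0) := by
    intro i j
    rcases lt_trichotomy i j with h | h | h
    · rw [if_pos h, if_neg (asymm h), add_zero]
    · subst h; simp [hdiag i]
    · rw [if_neg (asymm h), if_pos h, zero_add]
  have h1 : ∑ i ∈ Finset.range n, ∑ j ∈ Finset.range n, K i j
      = (∑ i ∈ Finset.range n, ∑ j ∈ Finset.range n, (if i < j then K i j else 0))
        + ∑ i ∈ Finset.range n, ∑ j ∈ Finset.range n, (if j < i then K i j else 0) := by
    rw [← Finset.sum_add_distrib]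
    refine Finset.sum_congr rfl fun i _ => ?_
    rw [← Finset.sum_add_distrib]
    exact Finset.sum_congr rfl fun j _ => hpt i j
  have h2 : ∑ i ∈ Finset.range n, ∑ j ∈ Finset.range n, (if j < i then K i j else 0)
      = ∑ i ∈ Finset.range n, ∑ j ∈ Finset.range n, (if i < j then K i j else 0) := by
    rw [Finset.sum_comm]
    exact Finset.sum_congr rfl fun j _ => Finset.sum_congr rfl fun i _ => by rw [hsymm]
  rw [h1, h2]
  ring

lemma choose_term_tendsto {α : ℝ} (hα : 0 < α) (u : ℕ → ℝ) {LB : ℝ}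
    (hV : Tendsto (Vs (fun x y => |x - y| ^ α) u u) atTop (𝓝 LB)) :
    Tendsto (fun n : ℕ => ((n.choose 2 : ℝ))⁻¹ *
      ∑ i ∈ Finset.range n, ∑ j ∈ Finset.range n, (if i < j then |u i - u j| ^ α else 0))
      atTop (𝓝 LB) := by
  have hdiag : Tendsto (fun n : ℕ => ((n, n) : ℕ × ℕ)) atTop atTop := by
    rw [← prod_atTop_atTop_eq]
    exact tendsto_id.prodMk tendsto_id
  have hdiagV : Tendsto (fun n : ℕ => Vs (fun x y => |x - y| ^ α) u u (n, n)) atTop (𝓝 LB) :=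
    hV.comp hdiag
  have hc1 : Tendsto (fun n : ℕ => (n:ℝ) - 1) atTop atTop := by
    have := tendsto_atTop_add_const_right atTop (-1 : ℝ) tendsto_natCast_atTop_atTop
    simpa [sub_eq_add_neg] using this
  have hc0 : Tendsto (fun n : ℕ => ((n:ℝ) - 1)⁻¹) atTop (𝓝 0) := hc1.inv_tendsto_atTop
  have hmul : Tendsto (fun n : ℕ => Vs (fun x y => |x - y| ^ α) u u (n, n)
      * (1 + ((n:ℝ) - 1)⁻¹)) atTop (𝓝 (LB * (1 + 0))) :=
    hdiagV.mul (tendsto_const_nhds.add hc0)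
  rw [mul_add, mul_one, mul_zero, add_zero] at hmul
  refine Tendsto.congr' ?_ hmul
  filter_upwards [eventually_ge_atTop 2] with n hn
  have hn2 : (2:ℝ) ≤ (n:ℝ) := by exact_mod_cast hn
  have hn0 : (n:ℝ) ≠ 0 := by linarith
  have hn1 : (n:ℝ) - 1 ≠ 0 := by linarith
  have hfull : ∑ i ∈ Finset.range n, ∑ j ∈ Finset.range n, |u i - u j| ^ α
      = 2 * ∑ i ∈ Finset.range n, ∑ j ∈ Finset.range n,
          (if i < j then |u i - u j| ^ α else 0) :=
    offdiag_half _ (fun i j => by rw [abs_sub_comm])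
      (fun i => by simp [Real.zero_rpow hα.ne']) n
  show Vs (fun x y => |x - y| ^ α) u u (n, n) * (1 + ((n:ℝ) - 1)⁻¹) = _
  unfold Vs
  simp only
  rw [hfull, Nat.cast_choose_two]
  field_simp
  ring

/-! ### Identification of the limit -/

lemma iint_eq_integral_pair {Ω : Type*} [MeasurableSpace Ω] {μ : Measure Ω}
    [IsProbabilityMeasure μ] {α : ℝ} (hα0 : 0 < α)
    (U V : Ω → ℝ) (hU : Measurable U) (hV : Measurable V) (hind : IndepFun U V μ)
    (hUmom : Integrable (fun x => |x| ^ α) (μ.map U))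
    (hVmom : Integrable (fun x => |x| ^ α) (μ.map V)) :
    ∫ x, ∫ y, |x - y| ^ α ∂(μ.map V) ∂(μ.map U) = ∫ ω, |U ω - V ω| ^ α ∂μ := by
  haveI : IsProbabilityMeasure (μ.map U) := Measure.isProbabilityMeasure_map hU.aemeasurable
  haveI : IsProbabilityMeasure (μ.map V) := Measure.isProbabilityMeasure_map hV.aemeasurable
  have mα : Measurable fun x : ℝ => |x| ^ α := (continuous_absRpow hα0).measurable
  have hmap : μ.map (fun ω => (U ω, V ω)) = (μ.map U).prod (μ.map V) :=
    (indepFun_iff_map_prod_eq_prod_map_map hU.aemeasurable hV.aemeasurable).mp hind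
  have hker : Continuous fun z : ℝ × ℝ => |z.1 - z.2| ^ α :=
    ((continuous_fst.sub continuous_snd).abs).rpow_const fun _ => Or.inr hα0.le
  have hint : Integrable (fun z : ℝ × ℝ => |z.1 - z.2| ^ α) ((μ.map U).prod (μ.map V)) := by
    have h1 : Integrable (fun z : ℝ × ℝ => |z.1| ^ α) ((μ.map U).prod (μ.map V)) := by
      have h2 : Integrable (fun x : ℝ => |x| ^ α) (((μ.map U).prod (μ.map V)).map Prod.fst) := by
        rw [Measure.map_fst_prod]
        simpa [measure_univ] using hUmom
      exact (integrable_map_measure mα.aestronglyMeasurable measurable_fst.aemeasurable).mp h2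
    have h2 : Integrable (fun z : ℝ × ℝ => |z.2| ^ α) ((μ.map U).prod (μ.map V)) := by
      have h3 : Integrable (fun x : ℝ => |x| ^ α) (((μ.map U).prod (μ.map V)).map Prod.snd) := by
        rw [Measure.map_snd_prod]
        simpa [measure_univ] using hVmom
      exact (integrable_map_measure mα.aestronglyMeasurable measurable_snd.aemeasurable).mp h3
    refine Integrable.mono' ((h1.add h2).const_mul (2 ^ α)) hker.aestronglyMeasurable
      (Filter.Eventually.of_forall fun z => ?_)
    rw [Real.norm_eq_abs, abs_of_nonneg (Real.rpow_nonneg (abs_nonneg _) _)]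
    exact rpow_abs_sub_le hα0 z.1 z.2
  calc ∫ x, ∫ y, |x - y| ^ α ∂(μ.map V) ∂(μ.map U)
      = ∫ z : ℝ × ℝ, |z.1 - z.2| ^ α ∂((μ.map U).prod (μ.map V)) :=
        (integral_prod _ hint).symm
    _ = ∫ ω, |U ω - V ω| ^ α ∂μ := by
        rw [← hmap, integral_map (hU.aemeasurable.prodMk hV.aemeasurable)
          hker.aestronglyMeasurable]

end EnergyAux

open EnergyAux in
set_option maxHeartbeats 2000000 in
theorem sample_energy_statistic_tendsto_ae
    {Ω : Type*} [MeasurableSpace Ω] {μ : Measure Ω} [IsProbabilityMeasure μ]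
    (α : ℝ) (hα : α ∈ Set.Ioo (0 : ℝ) 2)
    (X X' Y Y' : Ω → ℝ)
    (hX : Measurable X) (hX' : Measurable X') (hY : Measurable Y) (hY' : Measurable Y')
    (hcopies : iIndepFun ![X, X', Y, Y'] μ)
    (hXX' : μ.map X = μ.map X') (hYY' : μ.map Y = μ.map Y')
    (hXmom : Integrable (fun ω => |X ω| ^ α) μ) (hYmom : Integrable (fun ω => |Y ω| ^ α) μ)
    (Xs : ℕ → Ω → ℝ) (Ys : ℕ → Ω → ℝ)
    (hXs : ∀ i, Measurable (Xs i)) (hYs : ∀ j, Measurable (Ys j))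
    (hsamples : iIndepFun (Sum.elim Xs Ys) μ)
    (hXsdist : ∀ i, μ.map (Xs i) = μ.map X) (hYsdist : ∀ j, μ.map (Ys j) = μ.map Y) :
    ∀ᵐ ω ∂μ, Tendsto
      (fun p : ℕ × ℕ =>
        (2 / (p.1 * p.2 : ℝ)) * ∑ i ∈ Finset.range p.1, ∑ j ∈ Finset.range p.2,
            |Xs i ω - Ys j ω| ^ α
        - ((p.1.choose 2 : ℝ))⁻¹ * ∑ i ∈ Finset.range p.1, ∑ j ∈ Finset.range p.1,
            (if i < j then |Xs i ω - Xs j ω| ^ α else 0)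
        - ((p.2.choose 2 : ℝ))⁻¹ * ∑ i ∈ Finset.range p.2, ∑ j ∈ Finset.range p.2,
            (if i < j then |Ys i ω - Ys j ω| ^ α else 0))
      atTop
      (𝓝 (2 * (∫ ω, |X ω - Y ω| ^ α ∂μ) - (∫ ω, |X ω - X' ω| ^ α ∂μ)
        - ∫ ω, |Y ω - Y' ω| ^ α ∂μ)) := by
  obtain ⟨hα0, hα2⟩ := hα
  have mα : Measurable fun x : ℝ => |x| ^ α := (continuous_absRpow hα0).measurable
  haveI hPlam : IsProbabilityMeasure (μ.map X) := Measure.isProbabilityMeasure_map hX.aemeasurable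
  haveI hPrho : IsProbabilityMeasure (μ.map Y) := Measure.isProbabilityMeasure_map hY.aemeasurable
  have hlam : Integrable (fun x => |x| ^ α) (μ.map X) :=
    (integrable_map_measure mα.aestronglyMeasurable hX.aemeasurable).mpr hXmom
  have hrho : Integrable (fun x => |x| ^ α) (μ.map Y) :=
    (integrable_map_measure mα.aestronglyMeasurable hY.aemeasurable).mpr hYmom
  -- independence within the samples
  have hXsind : ∀ i j, i ≠ j → IndepFun (Xs i) (Xs j) μ := by
    intro i j hij
    exact hsamples.indepFun (show (Sum.inl i : ℕ ⊕ ℕ) ≠ Sum.inl j by simpa using hij)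
  have hYsind : ∀ i j, i ≠ j → IndepFun (Ys i) (Ys j) μ := by
    intro i j hij
    exact hsamples.indepFun (show (Sum.inr i : ℕ ⊕ ℕ) ≠ Sum.inr j by simpa using hij)
  -- pairwise independence among X, X', Y, Y'
  have hindXY : IndepFun X Y μ := by
    have := hcopies.indepFun (show (0 : Fin 4) ≠ 2 by decide)
    simpa using this
  have hindXX' : IndepFun X X' μ := by
    have := hcopies.indepFun (show (0 : Fin 4) ≠ 1 by decide)
    simpa using this
  have hindYY' : IndepFun Y Y' μ := by
    have := hcopies.indepFun (show (2 : Fin 4) ≠ 3 by decide)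
    simpa using this
  -- identification of the limits
  have hLA : ∫ x, ∫ y, |x - y| ^ α ∂(μ.map Y) ∂(μ.map X) = ∫ ω, |X ω - Y ω| ^ α ∂μ :=
    iint_eq_integral_pair hα0 X Y hX hY hindXY hlam hrho
  have hLB : ∫ x, ∫ y, |x - y| ^ α ∂(μ.map X) ∂(μ.map X) = ∫ ω, |X ω - X' ω| ^ α ∂μ := by
    have h := iint_eq_integral_pair hα0 X X' hX hX' hindXX' hlam (by rwa [← hXX'])
    rw [← hXX'] at h
    exact h
  have hLC : ∫ x, ∫ y, |x - y| ^ α ∂(μ.map Y) ∂(μ.map Y) = ∫ ω, |Y ω - Y' ω| ^ α ∂μ := by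
    have h := iint_eq_integral_pair hα0 Y Y' hY hY' hindYY' hrho (by rwa [← hYY'])
    rw [← hYY'] at h
    exact h
  -- almost sure convergence of the three V-statistics
  have TA := vstat_ae (μ := μ) hα0 Xs Ys hXs hYs hXsind hYsind (μ.map X) (μ.map Y)
    hXsdist hYsdist hlam hrho
  have TB := vstat_ae (μ := μ) hα0 Xs Xs hXs hXs hXsind hXsind (μ.map X) (μ.map X)
    hXsdist hXsdist hlam hlam
  have TC := vstat_ae (μ := μ) hα0 Ys Ys hYs hYs hYsind hYsind (μ.map Y) (μ.map Y)
    hYsdist hYsdist hrho hrho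
  filter_upwards [TA, TB, TC] with ω hA hB hC
  -- term A
  have TA' : Tendsto (fun p : ℕ × ℕ => (2 / (p.1 * p.2 : ℝ)) *
      ∑ i ∈ Finset.range p.1, ∑ j ∈ Finset.range p.2, |Xs i ω - Ys j ω| ^ α) atTop
      (𝓝 (2 * (∫ ω, |X ω - Y ω| ^ α ∂μ))) := by
    rw [← hLA]
    have h2 := hA.const_mul 2
    refine h2.congr fun p => ?_
    show 2 * Vs _ _ _ p = _
    unfold Vs
    ring
  -- term B
  have TB' : Tendsto (fun n : ℕ => ((n.choose 2 : ℝ))⁻¹ *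
      ∑ i ∈ Finset.range n, ∑ j ∈ Finset.range n,
        (if i < j then |Xs i ω - Xs j ω| ^ α else 0)) atTop
      (𝓝 (∫ ω, |X ω - X' ω| ^ α ∂μ)) := by
    rw [← hLB]
    exact choose_term_tendsto hα0 (fun i => Xs i ω) hB
  have TC' : Tendsto (fun n : ℕ => ((n.choose 2 : ℝ))⁻¹ *
      ∑ i ∈ Finset.range n, ∑ j ∈ Finset.range n,
        (if i < j then |Ys i ω - Ys j ω| ^ α else 0)) atTop
      (𝓝 (∫ ω, |Y ω - Y' ω| ^ α ∂μ)) := by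
    rw [← hLC]
    exact choose_term_tendsto hα0 (fun j => Ys j ω) hC
  have := (TA'.sub (TB'.comp tendsto_fst_nat)).sub (TC'.comp tendsto_snd_nat)
  exact this.congr fun p => rfl
end
end

section
/- The function x ↦ |x|^α on ℝ is negative definite for α ∈ (0,2]: for any points x₁,…,xₙ ∈ ℝ and real coefficients c₁,…,cₙ with ∑cᵢ = 0, one has ∑_{i,j} cᵢ cⱼ |xᵢ − xⱼ|^α ≤ 0. -/
open Finset MeasureTheory Real Set ENNReal

noncomputable section

open MeasureTheory Real Set in
lemma nd_integrand_integrable {α : ℝ} (h0 : 0 < α) (h2 : α < 2) (t : ℝ) :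
    IntegrableOn (fun u : ℝ => (1 - Real.cos (t * u)) * u ^ (-α - 1)) (Set.Ioi 0) := by
  have hcont : ContinuousOn (fun u : ℝ => (1 - Real.cos (t * u)) * u ^ (-α - 1)) (Set.Ioi 0) := by
    apply ContinuousOn.mul
    · exact (continuous_const.sub (Real.continuous_cos.comp (continuous_const.mul
        continuous_id))).continuousOn
    · exact continuousOn_id.rpow_const fun x hx => Or.inl (ne_of_gt hx)
  have hsplit : Set.Ioc (0:ℝ) 1 ∪ Set.Ioi (1:ℝ) = Set.Ioi 0 :=
    Set.Ioc_union_Ioi_eq_Ioi zero_le_one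
  rw [← hsplit]
  apply MeasureTheory.IntegrableOn.union
  · -- near 0 : dominate by (t^2/2) * u ^ (1 - α)
    have hg : IntegrableOn (fun u : ℝ => t ^ 2 / 2 * u ^ (1 - α)) (Set.Ioc 0 1) := by
      apply Integrable.const_mul
      have := intervalIntegral.intervalIntegrable_rpow' (a := 0) (b := 1)
        (r := 1 - α) (by linarith)
      rwa [intervalIntegrable_iff_integrableOn_Ioc_of_le zero_le_one] at this
    refine hg.mono' ((hcont.mono Set.Ioc_subset_Ioi_self).aestronglyMeasurable
      measurableSet_Ioc) ?_
    filter_upwards [ae_restrict_mem measurableSet_Ioc] with u hu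
    obtain ⟨hu0, hu1⟩ := hu
    have h1 : 0 ≤ 1 - Real.cos (t * u) := by
      have := Real.cos_le_one (t * u); linarith
    have h2' : 1 - Real.cos (t * u) ≤ (t * u) ^ 2 / 2 := by
      have := Real.one_sub_sq_div_two_le_cos (x := t * u); linarith
    have hrnn : (0:ℝ) ≤ u ^ (-α - 1) := Real.rpow_nonneg hu0.le _
    rw [Real.norm_eq_abs, abs_of_nonneg (mul_nonneg h1 hrnn)]
    have hpow : u ^ (2:ℝ) * u ^ (-α - 1) = u ^ (1 - α) := by
      rw [← Real.rpow_add hu0]; ring_nf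
    calc (1 - Real.cos (t * u)) * u ^ (-α - 1)
        ≤ (t * u) ^ 2 / 2 * u ^ (-α - 1) := by
          exact mul_le_mul_of_nonneg_right h2' hrnn
      _ = t ^ 2 / 2 * (u ^ (2:ℝ) * u ^ (-α - 1)) := by
          rw [Real.rpow_two]; ring
      _ = t ^ 2 / 2 * u ^ (1 - α) := by rw [hpow]
  · -- near ∞ : dominate by 2 * u ^ (-α - 1)
    have hg : IntegrableOn (fun u : ℝ => 2 * u ^ (-α - 1)) (Set.Ioi 1) :=
      (integrableOn_Ioi_rpow_of_lt (by linarith) zero_lt_one).const_mul 2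
    refine hg.mono' ((hcont.mono (Set.Ioi_subset_Ioi zero_le_one)).aestronglyMeasurable
      measurableSet_Ioi) ?_
    filter_upwards [ae_restrict_mem measurableSet_Ioi] with u hu
    have hu0 : (0:ℝ) < u := lt_trans zero_lt_one hu
    have h1 : 0 ≤ 1 - Real.cos (t * u) := by
      have := Real.cos_le_one (t * u); linarith
    have h2' : 1 - Real.cos (t * u) ≤ 2 := by
      have := Real.neg_one_le_cos (t * u); linarith
    have hrnn : (0:ℝ) ≤ u ^ (-α - 1) := Real.rpow_nonneg hu0.le _
    rw [Real.norm_eq_abs, abs_of_nonneg (mul_nonneg h1 hrnn)]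
    exact mul_le_mul_of_nonneg_right h2' hrnn

open MeasureTheory Real Set in
lemma nd_scaling {α : ℝ} (h0 : 0 < α) (t : ℝ) :
    ∫ u in Set.Ioi (0:ℝ), (1 - Real.cos (t * u)) * u ^ (-α - 1) =
      |t| ^ α * ∫ v in Set.Ioi (0:ℝ), (1 - Real.cos v) * v ^ (-α - 1) := by
  rcases eq_or_ne t 0 with rfl | ht
  · simp [Real.zero_rpow (ne_of_gt h0)]
  · have hs : (0:ℝ) < |t| := abs_pos.mpr ht
    have hcos : ∀ u : ℝ, Real.cos (t * u) = Real.cos (|t| * u) := by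
      intro u
      rcases abs_choice t with h | h
      · rw [h]
      · rw [h]; rw [neg_mul, Real.cos_neg]
    have key := MeasureTheory.integral_comp_mul_left_Ioi
      (fun v : ℝ => (1 - Real.cos v) * v ^ (-α - 1)) 0 hs
    rw [mul_zero] at key
    have congr1 : ∫ u in Set.Ioi (0:ℝ), (1 - Real.cos (|t| * u)) * (|t| * u) ^ (-α - 1)
        = |t| ^ (-α - 1) * ∫ u in Set.Ioi (0:ℝ), (1 - Real.cos (|t| * u)) * u ^ (-α - 1) := by
      rw [← MeasureTheory.integral_const_mul]
      apply MeasureTheory.setIntegral_congr_fun measurableSet_Ioi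
      intro u hu
      dsimp only
      rw [Real.mul_rpow hs.le (le_of_lt hu)]
      ring
    simp only [smul_eq_mul] at key
    rw [congr1] at key
    simp_rw [hcos]
    set I := ∫ u in Set.Ioi (0:ℝ), (1 - Real.cos (|t| * u)) * u ^ (-α - 1) with hI
    set C := ∫ v in Set.Ioi (0:ℝ), (1 - Real.cos v) * v ^ (-α - 1) with hC
    have e1 : |t| ^ α * |t| ^ (-α - 1) = |t|⁻¹ := by
      rw [← Real.rpow_add hs, show α + (-α - 1) = -1 by ring, Real.rpow_neg_one]
    have h5 : |t| ≠ 0 := ne_of_gt hs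
    have e2 : |t|⁻¹ * I = |t| ^ α * (|t|⁻¹ * C) := by
      calc |t|⁻¹ * I = |t| ^ α * |t| ^ (-α - 1) * I := by rw [e1]
        _ = |t| ^ α * (|t| ^ (-α - 1) * I) := by ring
        _ = |t| ^ α * (|t|⁻¹ * C) := by rw [key]
    calc I = |t| * (|t|⁻¹ * I) := by field_simp
      _ = |t| * (|t| ^ α * (|t|⁻¹ * C)) := by rw [e2]
      _ = |t| ^ α * C := by field_simp

open MeasureTheory Real Set in
lemma nd_C_pos {α : ℝ} (h0 : 0 < α) (h2 : α < 2) :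
    0 < ∫ v in Set.Ioi (0:ℝ), (1 - Real.cos v) * v ^ (-α - 1) := by
  have hint : IntegrableOn (fun v : ℝ => (1 - Real.cos v) * v ^ (-α - 1)) (Set.Ioi 0) := by
    have := nd_integrand_integrable h0 h2 1
    simpa using this
  have hnn : 0 ≤ᵐ[volume.restrict (Set.Ioi (0:ℝ))]
      fun v : ℝ => (1 - Real.cos v) * v ^ (-α - 1) := by
    filter_upwards [ae_restrict_mem measurableSet_Ioi] with v hv
    have h1 : 0 ≤ 1 - Real.cos v := by have := Real.cos_le_one v; linarith
    exact mul_nonneg h1 (Real.rpow_nonneg (le_of_lt hv) _)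
  rw [MeasureTheory.setIntegral_pos_iff_support_of_nonneg_ae hnn hint]
  have hsub : Set.Ioo (0:ℝ) π ⊆
      Function.support (fun v : ℝ => (1 - Real.cos v) * v ^ (-α - 1)) ∩ Set.Ioi 0 := by
    intro v hv
    obtain ⟨hv0, hvpi⟩ := hv
    constructor
    · have hcosne : Real.cos v ≠ 1 := by
        intro h
        have hpi := Real.pi_pos
        have := (Real.cos_eq_one_iff_of_lt_of_lt (by linarith) (by linarith)).mp h
        linarith
      have h1 : 0 < 1 - Real.cos v := by
        have := Real.cos_le_one v
        cases lt_or_eq_of_le this with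
        | inl h => linarith
        | inr h => exact absurd h hcosne
      have h2' : 0 < v ^ (-α - 1) := Real.rpow_pos_of_pos hv0 _
      exact ne_of_gt (mul_pos h1 h2')
    · exact hv0
  calc (0:ℝ≥0∞) < volume (Set.Ioo (0:ℝ) π) := by
        rw [Real.volume_Ioo]
        simp only [sub_zero]
        exact ENNReal.ofReal_pos.mpr Real.pi_pos
    _ ≤ _ := measure_mono hsub

theorem abs_rpow_negative_definite
    (α : ℝ) (hα : α ∈ Set.Ioc (0 : ℝ) 2)
    (n : ℕ) (x : Fin n → ℝ) (c : Fin n → ℝ) (hc : ∑ i, c i = 0) :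
    ∑ i, ∑ j, c i * c j * |x i - x j| ^ α ≤ 0 := by
  obtain ⟨h0, h2⟩ := hα
  rcases eq_or_lt_of_le h2 with rfl | h2'
  · -- α = 2 case
    have habs : ∀ i j, |x i - x j| ^ (2:ℝ) = (x i - x j) ^ 2 := by
      intro i j
      rw [show (2:ℝ) = ((2:ℕ):ℝ) by norm_num, Real.rpow_natCast, sq_abs]
    calc ∑ i, ∑ j, c i * c j * |x i - x j| ^ (2:ℝ)
        = (∑ i, c i * x i ^ 2) * (∑ j, c j) + (∑ i, c i) * (∑ j, c j * x j ^ 2)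
          - (∑ i, 2 * (c i * x i)) * (∑ j, c j * x j) := by
          rw [Finset.sum_mul_sum, Finset.sum_mul_sum, Finset.sum_mul_sum]
          rw [← Finset.sum_add_distrib, ← Finset.sum_sub_distrib]
          apply Finset.sum_congr rfl
          intro i _
          rw [← Finset.sum_add_distrib, ← Finset.sum_sub_distrib]
          apply Finset.sum_congr rfl
          intro j _
          rw [habs]
          ring
      _ ≤ 0 := by
          rw [hc]
          have : (∑ i, 2 * (c i * x i)) = 2 * ∑ i, c i * x i := by
            rw [Finset.mul_sum]
          rw [this]
          nlinarith [sq_nonneg (∑ i, c i * x i)]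
  · -- 0 < α < 2 case
    set C := ∫ v in Set.Ioi (0:ℝ), (1 - Real.cos v) * v ^ (-α - 1) with hC
    have hCpos : 0 < C := nd_C_pos h0 h2'
    have hrep : ∀ t : ℝ, |t| ^ α * C
        = ∫ u in Set.Ioi (0:ℝ), (1 - Real.cos (t * u)) * u ^ (-α - 1) :=
      fun t => (nd_scaling h0 t).symm
    -- key: S * C = integral of nonpositive function
    have hkey : (∑ i, ∑ j, c i * c j * |x i - x j| ^ α) * C
        = ∫ u in Set.Ioi (0:ℝ),
            (∑ i, ∑ j, c i * c j * (1 - Real.cos ((x i - x j) * u))) * u ^ (-α - 1) := by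
      have hint : ∀ (i j : Fin n), IntegrableOn
          (fun u : ℝ => c i * c j * ((1 - Real.cos ((x i - x j) * u)) * u ^ (-α - 1)))
          (Set.Ioi 0) :=
        fun i j => (nd_integrand_integrable h0 h2' (x i - x j)).const_mul _
      have swap : ∑ i, ∑ j, (∫ u in Set.Ioi (0:ℝ),
              c i * c j * ((1 - Real.cos ((x i - x j) * u)) * u ^ (-α - 1)))
          = ∫ u in Set.Ioi (0:ℝ), ∑ i, ∑ j,
              c i * c j * ((1 - Real.cos ((x i - x j) * u)) * u ^ (-α - 1)) := by
        calc ∑ i, ∑ j, (∫ u in Set.Ioi (0:ℝ),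
              c i * c j * ((1 - Real.cos ((x i - x j) * u)) * u ^ (-α - 1)))
            = ∑ i, ∫ u in Set.Ioi (0:ℝ), ∑ j,
              c i * c j * ((1 - Real.cos ((x i - x j) * u)) * u ^ (-α - 1)) :=
              Finset.sum_congr rfl fun i _ =>
                (MeasureTheory.integral_finset_sum _ fun j _ => hint i j).symm
          _ = _ := (MeasureTheory.integral_finset_sum _ fun i _ =>
                MeasureTheory.integrable_finset_sum _ fun j _ => hint i j).symm
      have congr2 : ∫ u in Set.Ioi (0:ℝ),
            (∑ i, ∑ j, c i * c j * (1 - Real.cos ((x i - x j) * u))) * u ^ (-α - 1)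
          = ∫ u in Set.Ioi (0:ℝ), ∑ i, ∑ j,
              c i * c j * ((1 - Real.cos ((x i - x j) * u)) * u ^ (-α - 1)) := by
        apply MeasureTheory.setIntegral_congr_fun measurableSet_Ioi
        intro u _
        dsimp only
        rw [Finset.sum_mul]
        apply Finset.sum_congr rfl
        intro i _
        rw [Finset.sum_mul]
        apply Finset.sum_congr rfl
        intro j _
        ring
      rw [congr2, ← swap, Finset.sum_mul]
      apply Finset.sum_congr rfl
      intro i _
      rw [Finset.sum_mul]
      apply Finset.sum_congr rfl
      intro j _
      rw [MeasureTheory.integral_const_mul, ← hrep]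
      ring
    -- the inner double sum is nonpositive for each u
    have hptwise : ∀ u : ℝ,
        (∑ i, ∑ j, c i * c j * (1 - Real.cos ((x i - x j) * u))) ≤ 0 := by
      intro u
      have expand : ∀ i j : Fin n, c i * c j * (1 - Real.cos ((x i - x j) * u)) =
          c i * c j - (c i * Real.cos (x i * u)) * (c j * Real.cos (x j * u))
            - (c i * Real.sin (x i * u)) * (c j * Real.sin (x j * u)) := by
        intro i j
        rw [sub_mul, Real.cos_sub]
        ring
      have : (∑ i, ∑ j, c i * c j * (1 - Real.cos ((x i - x j) * u)))
          = (∑ i, c i) * (∑ j, c j)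
            - (∑ i, c i * Real.cos (x i * u)) * (∑ j, c j * Real.cos (x j * u))
            - (∑ i, c i * Real.sin (x i * u)) * (∑ j, c j * Real.sin (x j * u)) := by
        rw [Finset.sum_mul_sum, Finset.sum_mul_sum, Finset.sum_mul_sum,
          ← Finset.sum_sub_distrib, ← Finset.sum_sub_distrib]
        apply Finset.sum_congr rfl
        intro i _
        rw [← Finset.sum_sub_distrib, ← Finset.sum_sub_distrib]
        apply Finset.sum_congr rfl
        intro j _
        rw [expand]
      rw [this, hc]
      nlinarith [sq_nonneg (∑ i, c i * Real.cos (x i * u)),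
        sq_nonneg (∑ i, c i * Real.sin (x i * u))]
    have hintnonpos : ∫ u in Set.Ioi (0:ℝ),
        (∑ i, ∑ j, c i * c j * (1 - Real.cos ((x i - x j) * u))) * u ^ (-α - 1) ≤ 0 := by
      apply MeasureTheory.integral_nonpos_of_ae
      filter_upwards [ae_restrict_mem measurableSet_Ioi] with u hu
      exact mul_nonpos_of_nonpos_of_nonneg (hptwise u) (Real.rpow_nonneg (le_of_lt hu) _)
    have hSC : (∑ i, ∑ j, c i * c j * |x i - x j| ^ α) * C ≤ 0 := by
      rw [hkey]; exact hintnonpos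
    nlinarith [hSC, hCpos]
end
end

section
/- For independent integrable random variables X, Y with independent copies X', Y', E|X−Y| ≥ (1/2)(E|X−X'| + E|Y−Y'|), i.e., the between-distance dominates the average of the within-distances; equivalently ℰ(X,Y) ≥ 0 with equality iff X and Y are identically distributed. -/
open MeasureTheory ProbabilityTheory
open scoped ENNReal

noncomputable section

open Set Filter Topology

private lemma energy_set_eq (t : ℝ) :
    {p : ℝ × ℝ | t ∈ Ico (min p.1 p.2) (max p.1 p.2)} = (Iic t ×ˢ Ioi t) ∪ (Ioi t ×ˢ Iic t) := by
  ext ⟨a, b⟩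
  simp only [mem_Ico, min_le_iff, lt_max_iff, mem_setOf_eq, mem_union, mem_prod, mem_Iic, mem_Ioi]
  constructor
  · rintro ⟨h1 | h1, h2 | h2⟩ <;>
      first | (left; constructor <;> linarith) | (right; constructor <;> linarith)
  · rintro (⟨h1, h2⟩ | ⟨h1, h2⟩) <;> constructor <;> first | (left; linarith) | (right; linarith)

/-- energy kernel in `ℝ≥0∞` -/
private def gE (ν ρ : Measure ℝ) (t : ℝ) : ℝ≥0∞ := ν (Iic t) * ρ (Ioi t) + ν (Ioi t) * ρ (Iic t)

/-- energy kernel in `ℝ` -/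
private def qR (ν ρ : Measure ℝ) (t : ℝ) : ℝ :=
  cdf ν t * (1 - cdf ρ t) + (1 - cdf ν t) * cdf ρ t

private lemma energy_key (ν ρ : Measure ℝ) [IsProbabilityMeasure ν] [IsProbabilityMeasure ρ] :
    ∫⁻ p, ENNReal.ofReal |p.1 - p.2| ∂(ν.prod ρ) = ∫⁻ t, gE ν ρ t := by
  have h1 : ∀ p : ℝ × ℝ, ENNReal.ofReal |p.1 - p.2|
      = ∫⁻ t, (Ico (min p.1 p.2) (max p.1 p.2)).indicator (fun _ => (1:ℝ≥0∞)) t := by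
    intro p
    rw [lintegral_indicator measurableSet_Ico]
    simp [Real.volume_Ico, max_sub_min_eq_abs, abs_sub_comm]
  simp_rw [h1]
  rw [lintegral_lintegral_swap]
  · refine lintegral_congr fun t => ?_
    have h2 : ∀ p : ℝ × ℝ, (Ico (min p.1 p.2) (max p.1 p.2)).indicator (fun _ => (1:ℝ≥0∞)) t
        = ((Iic t ×ˢ Ioi t) ∪ (Ioi t ×ˢ Iic t)).indicator (fun _ => (1:ℝ≥0∞)) p := by
      intro p
      rw [← energy_set_eq t]
      by_cases h : t ∈ Ico (min p.1 p.2) (max p.1 p.2)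
      · rw [indicator_of_mem h, indicator_of_mem (by exact h)]
      · rw [indicator_of_notMem h, indicator_of_notMem (by exact h)]
    simp_rw [h2]
    rw [lintegral_indicator (((measurableSet_Iic).prod measurableSet_Ioi).union
      ((measurableSet_Ioi).prod measurableSet_Iic))]
    have hd : Disjoint (Iic t ×ˢ Ioi t) (Ioi t ×ˢ Iic t) := by
      rw [Set.disjoint_left]
      rintro ⟨a, b⟩ ⟨(h1 : a ≤ t), (h2 : t < b)⟩ ⟨(h3 : t < a), _⟩
      exact absurd h3 (not_lt.2 h1)
    simp only [lintegral_one, Measure.restrict_apply MeasurableSet.univ, univ_inter]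
    rw [measure_union hd ((measurableSet_Ioi).prod measurableSet_Iic),
      Measure.prod_prod, Measure.prod_prod, gE]
  · have hA : MeasurableSet {q : (ℝ × ℝ) × ℝ | min q.1.1 q.1.2 ≤ q.2 ∧ q.2 < max q.1.1 q.1.2} :=
      (measurableSet_le ((measurable_fst.fst).min (measurable_fst.snd)) measurable_snd).inter
        (measurableSet_lt measurable_snd ((measurable_fst.fst).max (measurable_fst.snd)))
    have heq : (Function.uncurry fun (p : ℝ × ℝ) t =>
        (Ico (min p.1 p.2) (max p.1 p.2)).indicator (fun _ => (1:ℝ≥0∞)) t)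
        = {q : (ℝ × ℝ) × ℝ | min q.1.1 q.1.2 ≤ q.2 ∧ q.2 < max q.1.1 q.1.2}.indicator
            (fun _ => (1:ℝ≥0∞)) := by
      ext ⟨p, t⟩
      simp [Function.uncurry, indicator, mem_Ico]
    rw [heq]
    exact ((measurable_const.indicator hA)).aemeasurable

private lemma measurable_gE (ν ρ : Measure ℝ) : Measurable (gE ν ρ) := by
  have h1 : Measurable fun t => ν (Iic t) :=
    Monotone.measurable (fun a b hab => measure_mono (Iic_subset_Iic.2 hab))
  have h2 : Measurable fun t => ρ (Iic t) :=
    Monotone.measurable (fun a b hab => measure_mono (Iic_subset_Iic.2 hab))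
  have h3 : Measurable fun t => ν (Ioi t) :=
    Antitone.measurable (fun a b hab => measure_mono (Ioi_subset_Ioi hab))
  have h4 : Measurable fun t => ρ (Ioi t) :=
    Antitone.measurable (fun a b hab => measure_mono (Ioi_subset_Ioi hab))
  exact (h1.mul h4).add (h3.mul h2)

private lemma toReal_measure_Ioi (ρ : Measure ℝ) [IsProbabilityMeasure ρ] (t : ℝ) :
    (ρ (Ioi t)).toReal = 1 - cdf ρ t := by
  have h : Ioi t = (Iic t)ᶜ := by simp
  rw [h, measure_compl measurableSet_Iic (measure_ne_top _ _), measure_univ,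
    ENNReal.toReal_sub_of_le prob_le_one (by simp), ENNReal.toReal_one, cdf_eq_real, measureReal_def]

private lemma toReal_gE (ν ρ : Measure ℝ) [IsProbabilityMeasure ν] [IsProbabilityMeasure ρ]
    (t : ℝ) : (gE ν ρ t).toReal = qR ν ρ t := by
  rw [gE, qR, ENNReal.toReal_add (by finiteness) (by finiteness), ENNReal.toReal_mul,
    ENNReal.toReal_mul, toReal_measure_Ioi, toReal_measure_Ioi, cdf_eq_real, cdf_eq_real,
    measureReal_def, measureReal_def]

private lemma gE_lt_top (ν ρ : Measure ℝ) [IsProbabilityMeasure ν] [IsProbabilityMeasure ρ]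
    (t : ℝ) : gE ν ρ t < ⊤ := by
  rw [gE]; finiteness

private lemma energy_bridge (ν ρ : Measure ℝ) [IsProbabilityMeasure ν] [IsProbabilityMeasure ρ]
    (hfin : ∫⁻ t, gE ν ρ t ≠ ⊤) :
    (∫⁻ t, gE ν ρ t).toReal = ∫ t, qR ν ρ t ∧ Integrable (qR ν ρ) := by
  have hm := measurable_gE ν ρ
  have h1 : (∫⁻ t, gE ν ρ t).toReal = ∫ t, (gE ν ρ t).toReal := by
    rw [integral_toReal hm.aemeasurable (ae_of_all _ (gE_lt_top ν ρ))]
  have h2 : Integrable (fun t => (gE ν ρ t).toReal) volume :=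
    integrable_toReal_of_lintegral_ne_top hm.aemeasurable hfin
  constructor
  · rw [h1]; exact integral_congr_ae (ae_of_all _ (toReal_gE ν ρ))
  · exact h2.congr (ae_of_all _ (toReal_gE ν ρ))

private lemma meas_eq_of_cdf_ae_eq (ν ρ : Measure ℝ) [IsProbabilityMeasure ν]
    [IsProbabilityMeasure ρ] (h : ∀ᵐ t, cdf ν t = cdf ρ t) : ν = ρ := by
  set S : Set ℝ := {s | cdf ν s = cdf ρ s} with hS
  have hSc : volume Sᶜ = 0 := h
  have hpt : ∀ t, cdf ν t = cdf ρ t := by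
    intro t
    have hne : (𝓝[Ioi t ∩ S] t).NeBot := by
      rw [← mem_closure_iff_nhdsWithin_neBot, Metric.mem_closure_iff]
      intro ε hε
      have hvol : volume (Ioo t (t + ε)) ≠ 0 := by
        rw [Real.volume_Ioo]
        simp only [ne_eq, ENNReal.ofReal_eq_zero, not_le]
        linarith
      have hns : ¬ (Ioo t (t + ε) ⊆ Sᶜ) := by
        intro hsub
        exact hvol (le_antisymm (hSc ▸ measure_mono hsub) zero_le)
      obtain ⟨b, hb, hbS⟩ := not_subset.1 hns
      refine ⟨b, ⟨hb.1, not_not.1 hbS⟩, ?_⟩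
      rw [Real.dist_eq, abs_sub_comm, abs_of_pos (by linarith [hb.1])]
      linarith [hb.2]
    have hle : 𝓝[Ioi t ∩ S] t ≤ 𝓝[Ici t] t :=
      nhdsWithin_mono t (fun x hx => mem_Ici.2 (le_of_lt hx.1))
    have h1 : Tendsto (cdf ν) (𝓝[Ioi t ∩ S] t) (𝓝 (cdf ν t)) :=
      ((cdf ν).right_continuous t).tendsto.mono_left hle
    have h2 : Tendsto (cdf ρ) (𝓝[Ioi t ∩ S] t) (𝓝 (cdf ρ t)) :=
      ((cdf ρ).right_continuous t).tendsto.mono_left hle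
    have heq : cdf ν =ᶠ[𝓝[Ioi t ∩ S] t] cdf ρ := by
      filter_upwards [self_mem_nhdsWithin] with x hx
      exact hx.2
    exact tendsto_nhds_unique (h1.congr' heq) h2
  have hcdf : cdf ν = cdf ρ := by ext x; exact hpt x
  calc ν = (cdf ν).measure := (measure_cdf ν).symm
    _ = (cdf ρ).measure := by rw [hcdf]
    _ = ρ := measure_cdf ρ

private lemma energy_pair {Ω : Type*} [MeasurableSpace Ω] {μ : Measure Ω}
    [IsProbabilityMeasure μ] (A B : Ω → ℝ) (hA : Measurable A) (hB : Measurable B)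
    (hAB : IndepFun A B μ) (hAi : Integrable A μ) (hBi : Integrable B μ) :
    ∫ ω, |A ω - B ω| ∂μ = ∫ t, qR (μ.map A) (μ.map B) t
      ∧ Integrable (qR (μ.map A) (μ.map B)) := by
  haveI : IsProbabilityMeasure (μ.map A) := Measure.isProbabilityMeasure_map hA.aemeasurable
  haveI : IsProbabilityMeasure (μ.map B) := Measure.isProbabilityMeasure_map hB.aemeasurable
  have hmap : μ.map (fun ω => (A ω, B ω)) = (μ.map A).prod (μ.map B) :=
    (indepFun_iff_map_prod_eq_prod_map_map hA.aemeasurable hB.aemeasurable).mp hAB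
  have hlin : ∫⁻ ω, ENNReal.ofReal |A ω - B ω| ∂μ = ∫⁻ t, gE (μ.map A) (μ.map B) t := by
    calc ∫⁻ ω, ENNReal.ofReal |A ω - B ω| ∂μ
        = ∫⁻ p, ENNReal.ofReal |p.1 - p.2| ∂(μ.map (fun ω => (A ω, B ω))) := by
          rw [lintegral_map (f := fun p : ℝ × ℝ => ENNReal.ofReal |p.1 - p.2|)
            ((measurable_fst.sub measurable_snd).abs.ennreal_ofReal)
            (hA.prodMk hB)]
      _ = ∫⁻ p, ENNReal.ofReal |p.1 - p.2| ∂((μ.map A).prod (μ.map B)) := by rw [hmap]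
      _ = ∫⁻ t, gE (μ.map A) (μ.map B) t := energy_key _ _
  have hInt : Integrable (fun ω => |A ω - B ω|) μ := (hAi.sub hBi).abs
  have hfin : ∫⁻ t, gE (μ.map A) (μ.map B) t ≠ ⊤ := by
    rw [← hlin]
    have := hInt.lintegral_lt_top
    simpa using this.ne
  have hE : ∫ ω, |A ω - B ω| ∂μ = (∫⁻ ω, ENNReal.ofReal |A ω - B ω| ∂μ).toReal :=
    integral_eq_lintegral_of_nonneg_ae (ae_of_all _ fun ω => abs_nonneg _)
      ((hA.sub hB).abs).aestronglyMeasurable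
  obtain ⟨hb1, hb2⟩ := energy_bridge (μ.map A) (μ.map B) hfin
  exact ⟨by rw [hE, hlin, hb1], hb2⟩

theorem between_distance_dominates_within
    {Ω : Type*} [MeasurableSpace Ω] {μ : Measure Ω} [IsProbabilityMeasure μ]
    (X X' Y Y' : Ω → ℝ)
    (hX : Measurable X) (hX' : Measurable X') (hY : Measurable Y) (hY' : Measurable Y')
    (hindep : iIndepFun ![X, X', Y, Y'] μ)
    (hXX' : μ.map X = μ.map X') (hYY' : μ.map Y = μ.map Y')
    (hXint : Integrable X μ) (hYint : Integrable Y μ) :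
    (1 / 2) * ((∫ ω, |X ω - X' ω| ∂μ) + ∫ ω, |Y ω - Y' ω| ∂μ) ≤ ∫ ω, |X ω - Y ω| ∂μ ∧
    (2 * (∫ ω, |X ω - Y ω| ∂μ) - (∫ ω, |X ω - X' ω| ∂μ) - (∫ ω, |Y ω - Y' ω| ∂μ) = 0
      ↔ μ.map X = μ.map Y) := by
  haveI : IsProbabilityMeasure (μ.map X) := Measure.isProbabilityMeasure_map hX.aemeasurable
  haveI : IsProbabilityMeasure (μ.map Y) := Measure.isProbabilityMeasure_map hY.aemeasurable
  -- integrability of the copies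
  have hX'int : Integrable X' μ := by
    have h1 : Integrable id (μ.map X) := (integrable_map_measure aestronglyMeasurable_id
      hX.aemeasurable).mpr (by simpa [Function.comp_def] using hXint)
    rw [hXX'] at h1
    simpa [Function.comp_def] using (integrable_map_measure aestronglyMeasurable_id
      hX'.aemeasurable).mp h1
  have hY'int : Integrable Y' μ := by
    have h1 : Integrable id (μ.map Y) := (integrable_map_measure aestronglyMeasurable_id
      hY.aemeasurable).mpr (by simpa [Function.comp_def] using hYint)
    rw [hYY'] at h1
    simpa [Function.comp_def] using (integrable_map_measure aestronglyMeasurable_id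
      hY'.aemeasurable).mp h1
  -- pairwise independence
  have hXY : IndepFun X Y μ := by
    simpa using hindep.indepFun (show (0 : Fin 4) ≠ 2 by decide)
  have hXX'i : IndepFun X X' μ := by
    simpa using hindep.indepFun (show (0 : Fin 4) ≠ 1 by decide)
  have hYY'i : IndepFun Y Y' μ := by
    simpa using hindep.indepFun (show (2 : Fin 4) ≠ 3 by decide)
  -- the three integral representations
  obtain ⟨hA, hAint⟩ := energy_pair X Y hX hY hXY hXint hYint
  obtain ⟨hB, hBint⟩ := energy_pair X X' hX hX' hXX'i hXint hX'int
  obtain ⟨hC, hCint⟩ := energy_pair Y Y' hY hY' hYY'i hYint hY'int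
  rw [← hXX'] at hB hBint
  rw [← hYY'] at hC hCint
  -- the energy identity: 2A - B - C = ∫ 2 (F - G)^2
  have hsq : ∀ t, 2 * qR (μ.map X) (μ.map Y) t - qR (μ.map X) (μ.map X) t - qR (μ.map Y) (μ.map Y) t = 2 * (cdf (μ.map X) t - cdf (μ.map Y) t) ^ 2 := by
    intro t
    simp only [qR]
    ring
  have hintsq : Integrable (fun t => 2 * (cdf (μ.map X) t - cdf (μ.map Y) t) ^ 2) volume := by
    have : (fun t => 2 * qR (μ.map X) (μ.map Y) t - qR (μ.map X) (μ.map X) t - qR (μ.map Y) (μ.map Y) t)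
        = fun t => 2 * (cdf (μ.map X) t - cdf (μ.map Y) t) ^ 2 := funext hsq
    rw [← this]
    exact ((hAint.const_mul 2).sub hBint).sub hCint
  have hiden : 2 * (∫ ω, |X ω - Y ω| ∂μ) - (∫ ω, |X ω - X' ω| ∂μ) - (∫ ω, |Y ω - Y' ω| ∂μ)
      = ∫ t, 2 * (cdf (μ.map X) t - cdf (μ.map Y) t) ^ 2 := by
    have h1 : ∫ t, (2 * qR (μ.map X) (μ.map Y) t - qR (μ.map X) (μ.map X) t
          - qR (μ.map Y) (μ.map Y) t)
        = 2 * (∫ t, qR (μ.map X) (μ.map Y) t) - (∫ t, qR (μ.map X) (μ.map X) t)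
          - ∫ t, qR (μ.map Y) (μ.map Y) t := by
      have i2 : Integrable (fun t => 2 * qR (μ.map X) (μ.map Y) t) volume :=
        hAint.const_mul 2
      have i1 : Integrable (fun t => 2 * qR (μ.map X) (μ.map Y) t
          - qR (μ.map X) (μ.map X) t) volume := i2.sub hBint
      rw [integral_sub i1 hCint, integral_sub i2 hBint, integral_const_mul]
    rw [hA, hB, hC, ← h1]
    exact integral_congr_ae (ae_of_all _ hsq)
  constructor
  · have hpos : 0 ≤ ∫ t, 2 * (cdf (μ.map X) t - cdf (μ.map Y) t) ^ 2 :=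
      integral_nonneg fun t => by positivity
    rw [← hiden] at hpos
    linarith
  · rw [hiden]
    constructor
    · intro h0
      have hae : (fun t => 2 * (cdf (μ.map X) t - cdf (μ.map Y) t) ^ 2) =ᵐ[volume] 0 :=
        (integral_eq_zero_iff_of_nonneg (fun t => by positivity) hintsq).mp h0
      have hcdf : ∀ᵐ t, cdf (μ.map X) t = cdf (μ.map Y) t := by
        filter_upwards [hae] with t ht
        have : 2 * (cdf (μ.map X) t - cdf (μ.map Y) t) ^ 2 = 0 := ht
        nlinarith [sq_nonneg (cdf (μ.map X) t - cdf (μ.map Y) t)]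
      exact meas_eq_of_cdf_ae_eq (μ.map X) (μ.map Y) hcdf
    · intro h
      rw [show μ.map X = μ.map Y from h]
      simp
end
end

section
/- For any real numbers a and b, ∫_{−∞}^{∞} (1 − cos(t(a−b)))/(π t²) dt = |a − b|; consequently, for independent integrable random variables X, Y with characteristic functions φ_X, φ_Y, E|X−Y| = ∫ (1 − Re(φ_X(t) φ_Y(−t)))/(π t²) dt. -/
open MeasureTheory ProbabilityTheory Real
open scoped ENNReal

open Set Filter Topology

noncomputable section


lemma aux_mul_exp_le (x : ℝ) : x * Real.exp (-x) ≤ Real.exp (-1) := by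
  rcases le_or_gt x 0 with h | h
  · exact le_trans (mul_nonpos_of_nonpos_of_nonneg h (Real.exp_pos _).le) (Real.exp_pos _).le
  · have h1 := Real.add_one_le_exp (x - 1)
    rw [Real.exp_sub] at h1
    rw [Real.exp_neg, Real.exp_neg]
    have e1 := Real.exp_pos x
    have e2 := Real.exp_pos 1
    rw [div_eq_mul_inv] at h1
    have h2 : x * Real.exp 1 ≤ Real.exp x := by
      nlinarith [mul_le_mul_of_nonneg_right h1 e2.le, mul_inv_cancel₀ e2.ne']
    calc x * (Real.exp x)⁻¹ ≤ (Real.exp x / Real.exp 1) * (Real.exp x)⁻¹ := by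
          gcongr; rw [le_div_iff₀ e2]; exact h2
      _ = (Real.exp 1)⁻¹ * (Real.exp x * (Real.exp x)⁻¹) := by ring
      _ = (Real.exp 1)⁻¹ := by rw [mul_inv_cancel₀ e1.ne', mul_one]

lemma tendsto_exp_neg_mul {s : ℝ} (hs : 0 < s) :
    Tendsto (fun u : ℝ => Real.exp (-(s*u))) atTop (𝓝 0) :=
  Real.tendsto_exp_atBot.comp
    (tendsto_neg_atTop_atBot.comp (Tendsto.const_mul_atTop hs tendsto_id))

-- Laplace transform of 1
lemma lap_one {s : ℝ} (hs : 0 < s) :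
    ∫ u in Ioi (0:ℝ), Real.exp (-(s*u)) = 1/s := by
  have h := integral_Ioi_of_hasDerivAt_of_tendsto' (f := fun u : ℝ => -Real.exp (-(s*u))/s)
    (f' := fun u : ℝ => Real.exp (-(s*u))) (a := 0)
    (fun x _ => by
      have : HasDerivAt (fun u : ℝ => -(s*u)) (-s) x := by
        have h := ((hasDerivAt_id x).const_mul s).neg; simp only [mul_one] at h; exact h
      have := (this.exp.neg).div_const s
      refine this.congr_deriv ?_
      field_simp)
    (by simpa using exp_neg_integrableOn_Ioi 0 hs)
    (by
      have := ((tendsto_exp_neg_mul hs).neg).div_const s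
      simpa using this)
  rw [h]
  simp [div_eq_mul_inv]

lemma lap_cos {s : ℝ} (hs : 0 < s) :
    ∫ u in Ioi (0:ℝ), Real.exp (-(s*u)) * Real.cos u = s/(s^2+1) := by
  have hne : s^2 + 1 ≠ 0 := by positivity
  have hint : IntegrableOn (fun u : ℝ => Real.exp (-(s*u)) * Real.cos u) (Ioi 0) := by
    refine Integrable.mono' (by
      have h := exp_neg_integrableOn_Ioi 0 hs; simp only [neg_mul] at h; exact h) ?_ ?_
    · exact (((measurable_const.mul measurable_id').neg.exp).mul measurable_cos).aestronglyMeasurable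
    · refine Eventually.of_forall fun u => ?_
      rw [norm_mul, Real.norm_eq_abs, Real.norm_eq_abs, abs_of_pos (Real.exp_pos _)]
      nlinarith [abs_cos_le_one u, abs_nonneg (Real.cos u), Real.exp_pos (-(s*u)),
        mul_le_mul_of_nonneg_left (abs_cos_le_one u) (Real.exp_pos (-(s*u))).le]
  have h := integral_Ioi_of_hasDerivAt_of_tendsto'
    (f := fun u : ℝ => Real.exp (-(s*u)) * (Real.sin u - s * Real.cos u) / (s^2+1))
    (f' := fun u : ℝ => Real.exp (-(s*u)) * Real.cos u) (a := 0)
    (fun x _ => by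
      have h1 : HasDerivAt (fun u : ℝ => -(s*u)) (-s) x := by
        have h := ((hasDerivAt_id x).const_mul s).neg; simp only [mul_one] at h; exact h
      have h2 : HasDerivAt (fun u : ℝ => Real.sin u - s * Real.cos u)
          (Real.cos x + s * Real.sin x) x := by
        have := (Real.hasDerivAt_sin x).sub (((Real.hasDerivAt_cos x)).const_mul s)
        refine this.congr_deriv ?_; ring
      have := ((h1.exp.mul h2)).div_const (s^2+1)
      refine this.congr_deriv ?_
      field_simp
      ring)
    hint
    (by
      have key : Tendsto (fun u : ℝ => Real.exp (-(s*u)) * (Real.sin u - s * Real.cos u) / (s^2+1))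
          atTop (𝓝 0) := by
        apply squeeze_zero_norm (a := fun u : ℝ => Real.exp (-(s*u)) * (1 + s) / (s^2+1))
        · intro u
          rw [norm_div, norm_mul, Real.norm_eq_abs, Real.norm_eq_abs, Real.norm_eq_abs,
            abs_of_pos (Real.exp_pos _), abs_of_pos (by positivity : (0:ℝ) < s^2+1)]
          have : |Real.sin u - s * Real.cos u| ≤ 1 + s := by
            have := abs_sub (Real.sin u) (s * Real.cos u)
            have h3 : |Real.sin u| ≤ 1 := abs_sin_le_one u
            have h4 : |s * Real.cos u| ≤ s := by
              rw [abs_mul, abs_of_pos hs]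
              nlinarith [abs_cos_le_one u]
            calc |Real.sin u - s * Real.cos u| ≤ |Real.sin u| + |s * Real.cos u| := abs_sub _ _
              _ ≤ 1 + s := add_le_add h3 h4
          gcongr
        · have := ((tendsto_exp_neg_mul hs).mul_const (1+s)).div_const (s^2+1)
          simpa using this
      exact key)
  rw [h]
  simp only [mul_zero, Real.exp_zero, Real.sin_zero, Real.cos_zero, one_mul, mul_one, zero_sub,
    zero_div, neg_zero]
  field_simp

lemma integrable_mul_exp {u : ℝ} (hu : 0 < u) :
    IntegrableOn (fun s : ℝ => s * Real.exp (-(s*u))) (Ioi 0) := by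
  have hbase : IntegrableOn (fun s : ℝ => Real.exp (-(u/2*s))) (Ioi 0) := by
    simpa using exp_neg_integrableOn_Ioi 0 (half_pos hu)
  refine Integrable.mono' (hbase.const_mul (2/u * Real.exp (-1))) ?_ ?_
  · exact (measurable_id'.mul ((measurable_id'.mul measurable_const).neg.exp)).aestronglyMeasurable
  · refine (ae_restrict_mem measurableSet_Ioi).mono fun s hs => ?_
    have hs' : (0:ℝ) < s := hs
    rw [Real.norm_eq_abs, abs_of_nonneg (by positivity)]
    have key : s * Real.exp (-(s*u/2)) ≤ 2/u * Real.exp (-1) := by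
      have := aux_mul_exp_le (s*u/2)
      calc s * Real.exp (-(s*u/2)) = (2/u) * (s*u/2 * Real.exp (-(s*u/2))) := by
            field_simp
        _ ≤ 2/u * Real.exp (-1) := by
            apply mul_le_mul_of_nonneg_left this (by positivity)
    calc s * Real.exp (-(s*u)) = (s * Real.exp (-(s*u/2))) * Real.exp (-(u/2*s)) := by
          rw [mul_assoc, ← Real.exp_add]; ring_nf
      _ ≤ (2/u * Real.exp (-1)) * Real.exp (-(u/2*s)) := by
          apply mul_le_mul_of_nonneg_right key (Real.exp_pos _).le

lemma lap_lin {u : ℝ} (hu : 0 < u) :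
    ∫ s in Ioi (0:ℝ), s * Real.exp (-(s*u)) = 1/u^2 := by
  have h := integral_Ioi_of_hasDerivAt_of_tendsto'
    (f := fun s : ℝ => -(Real.exp (-(s*u)) * (s*u+1))/u^2)
    (f' := fun s : ℝ => s * Real.exp (-(s*u))) (a := 0)
    (fun x _ => by
      have h1 : HasDerivAt (fun s : ℝ => -(s*u)) (-u) x := by
        have h := ((hasDerivAt_id x).mul_const u).neg; simp only [one_mul] at h; exact h
      have h2 : HasDerivAt (fun s : ℝ => s*u+1) u x := by
        simpa using ((hasDerivAt_id x).mul_const u).add_const 1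
      have := ((h1.exp.mul h2).neg).div_const (u^2)
      refine this.congr_deriv ?_
      field_simp
      ring)
    (integrable_mul_exp hu)
    (by
      refine squeeze_zero_norm' ?_ ?_
        (a := fun s : ℝ => (s*u*Real.exp (-(s*u)) + Real.exp (-(s*u)))/u^2)
      · filter_upwards [eventually_ge_atTop (0:ℝ)] with s hs
        have e := Real.exp_pos (-(s*u))
        rw [Real.norm_eq_abs, abs_div, abs_neg, abs_of_nonneg (by nlinarith [e.le, mul_nonneg hs hu.le] : 
          (0:ℝ) ≤ Real.exp (-(s*u)) * (s*u+1)), abs_of_pos (by positivity : (0:ℝ) < u^2)]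
        apply div_le_div_of_nonneg_right ?_ (by positivity) |>.trans_eq rfl
        nlinarith
      · have t1 : Tendsto (fun s : ℝ => s*u*Real.exp (-(s*u))) atTop (𝓝 0) := by
          have := (Real.tendsto_pow_mul_exp_neg_atTop_nhds_zero 1).comp
            (tendsto_id.atTop_mul_const hu)
          simpa [Function.comp_def] using this
        have := ((t1.add (tendsto_exp_neg_mul (by linarith : (0:ℝ) < u))).div_const (u^2))
        simpa [mul_comm] using this)
  rw [h]
  norm_num
  rw [neg_div, neg_neg, one_div]

lemma K1 {u : ℝ} (hu : 0 < u) :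
    ∫⁻ s in Ioi (0:ℝ), ENNReal.ofReal ((1 - Real.cos u) * (s * Real.exp (-(s*u))))
      = ENNReal.ofReal ((1 - Real.cos u)/u^2) := by
  have hc : (0:ℝ) ≤ 1 - Real.cos u := by nlinarith [Real.cos_le_one u]
  calc ∫⁻ s in Ioi (0:ℝ), ENNReal.ofReal ((1 - Real.cos u) * (s * Real.exp (-(s*u))))
      = ∫⁻ s in Ioi (0:ℝ), ENNReal.ofReal (1 - Real.cos u)
          * ENNReal.ofReal (s * Real.exp (-(s*u))) := by
        simp_rw [← ENNReal.ofReal_mul hc]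
    _ = ENNReal.ofReal (1 - Real.cos u)
          * ∫⁻ s in Ioi (0:ℝ), ENNReal.ofReal (s * Real.exp (-(s*u))) :=
        lintegral_const_mul' _ _ ENNReal.ofReal_ne_top
    _ = ENNReal.ofReal (1 - Real.cos u) * ENNReal.ofReal (1/u^2) := by
        rw [← ofReal_integral_eq_lintegral_ofReal (integrable_mul_exp hu)
          ((ae_restrict_mem measurableSet_Ioi).mono fun s hs =>
            mul_nonneg (le_of_lt hs) (Real.exp_pos _).le), lap_lin hu]
    _ = ENNReal.ofReal ((1 - Real.cos u)/u^2) := by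
        rw [← ENNReal.ofReal_mul hc, mul_one_div]

lemma K2 {s : ℝ} (hs : 0 < s) :
    ∫⁻ u in Ioi (0:ℝ), ENNReal.ofReal ((1 - Real.cos u) * (s * Real.exp (-(s*u))))
      = ENNReal.ofReal (1/(1+s^2)) := by
  have hbase : IntegrableOn (fun u : ℝ => Real.exp (-(s*u))) (Ioi 0) := by
    simpa using exp_neg_integrableOn_Ioi 0 hs
  have hcos : IntegrableOn (fun u : ℝ => Real.exp (-(s*u)) * Real.cos u) (Ioi 0) := by
    refine Integrable.mono' hbase ?_ ?_
    · exact (((measurable_const.mul measurable_id').neg.exp).mul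
        measurable_cos).aestronglyMeasurable
    · refine Eventually.of_forall fun u => ?_
      rw [norm_mul, Real.norm_eq_abs, Real.norm_eq_abs, abs_of_pos (Real.exp_pos _)]
      nlinarith [abs_cos_le_one u, abs_nonneg (Real.cos u), Real.exp_pos (-(s*u)),
        mul_le_mul_of_nonneg_left (abs_cos_le_one u) (Real.exp_pos (-(s*u))).le]
  have hint : IntegrableOn
      (fun u : ℝ => (1 - Real.cos u) * (s * Real.exp (-(s*u)))) (Ioi 0) := by
    have : (fun u : ℝ => (1 - Real.cos u) * (s * Real.exp (-(s*u))))
        = fun u : ℝ => s * (Real.exp (-(s*u)) - Real.exp (-(s*u)) * Real.cos u) := by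
      funext u; ring
    rw [this]
    exact ((hbase.sub hcos).const_mul s)
  rw [← ofReal_integral_eq_lintegral_ofReal hint
    (Eventually.of_forall fun u => mul_nonneg (by nlinarith [Real.cos_le_one u])
      (mul_nonneg hs.le (Real.exp_pos _).le))]
  congr 1
  have : (fun u : ℝ => (1 - Real.cos u) * (s * Real.exp (-(s*u))))
      = fun u : ℝ => s * (Real.exp (-(s*u)) - Real.exp (-(s*u)) * Real.cos u) := by
    funext u; ring
  rw [this, integral_const_mul, integral_sub hbase hcos, lap_one hs, lap_cos hs]
  have h1 : s^2 + 1 ≠ 0 := by positivity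
  field_simp
  ring

lemma K3 : ∫⁻ u in Ioi (0:ℝ), ENNReal.ofReal ((1 - Real.cos u)/u^2)
    = ENNReal.ofReal (π/2) := by
  have swap : ∫⁻ u in Ioi (0:ℝ), ∫⁻ s in Ioi (0:ℝ),
        ENNReal.ofReal ((1 - Real.cos u) * (s * Real.exp (-(s*u))))
      = ∫⁻ s in Ioi (0:ℝ), ∫⁻ u in Ioi (0:ℝ),
        ENNReal.ofReal ((1 - Real.cos u) * (s * Real.exp (-(s*u)))) := by
    rw [lintegral_lintegral_swap]
    apply Measurable.aemeasurable
    apply ENNReal.measurable_ofReal.comp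
    apply Measurable.mul
    · exact (measurable_const.sub (Real.measurable_cos.comp measurable_fst))
    · exact measurable_snd.mul (((measurable_snd.mul measurable_fst).neg).exp)
  calc ∫⁻ u in Ioi (0:ℝ), ENNReal.ofReal ((1 - Real.cos u)/u^2)
      = ∫⁻ u in Ioi (0:ℝ), ∫⁻ s in Ioi (0:ℝ),
          ENNReal.ofReal ((1 - Real.cos u) * (s * Real.exp (-(s*u)))) := by
        refine (setLIntegral_congr_fun measurableSet_Ioi
          (fun u hu => ?_)).symm
        exact K1 hu
    _ = ∫⁻ s in Ioi (0:ℝ), ∫⁻ u in Ioi (0:ℝ),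
          ENNReal.ofReal ((1 - Real.cos u) * (s * Real.exp (-(s*u)))) := swap
    _ = ∫⁻ s in Ioi (0:ℝ), ENNReal.ofReal (1/(1+s^2)) := by
        refine setLIntegral_congr_fun measurableSet_Ioi
          (fun s hs => ?_)
        exact K2 hs
    _ = ENNReal.ofReal (π/2) := by
        rw [← ofReal_integral_eq_lintegral_ofReal
          (by simp_rw [one_div]; exact integrable_inv_one_add_sq.integrableOn :
            Integrable (fun s : ℝ => 1/(1+s^2)) (volume.restrict (Ioi 0)))
          (Eventually.of_forall fun s => by positivity)]
        congr 1
        simp_rw [one_div]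
        rw [integral_Ioi_inv_one_add_sq]
        simp

lemma cos_div_nonneg (u : ℝ) : 0 ≤ (1 - Real.cos u)/u^2 := by
  apply div_nonneg (by nlinarith [Real.cos_le_one u]) (sq_nonneg u)

lemma meas_cos_div : Measurable (fun u : ℝ => (1 - Real.cos u)/u^2) :=
  (measurable_const.sub Real.measurable_cos).div (measurable_id'.pow_const 2)

lemma K4int : IntegrableOn (fun u : ℝ => (1 - Real.cos u)/u^2) (Ioi 0) := by
  refine ⟨meas_cos_div.aestronglyMeasurable, ?_⟩
  rw [hasFiniteIntegral_iff_ofReal (Eventually.of_forall cos_div_nonneg)]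
  rw [K3]
  exact ENNReal.ofReal_lt_top

lemma K4 : ∫ u in Ioi (0:ℝ), (1 - Real.cos u)/u^2 = π/2 := by
  rw [integral_eq_lintegral_of_nonneg_ae (Eventually.of_forall cos_div_nonneg)
    meas_cos_div.aestronglyMeasurable, K3, ENNReal.toReal_ofReal (by positivity)]

lemma R_integrable : Integrable (fun u : ℝ => (1 - Real.cos u)/u^2) := by
  have hIic : IntegrableOn (fun u : ℝ => (1 - Real.cos u)/u^2) (Iic 0) := by
    rw [← Measure.map_neg_eq_self (volume : Measure ℝ)]
    have m : MeasurableEmbedding fun x : ℝ => -x :=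
      (Homeomorph.neg ℝ).measurableEmbedding
    rw [m.integrableOn_map_iff]
    have : ((fun u : ℝ => (1 - Real.cos u)/u^2) ∘ fun x : ℝ => -x)
        = fun u : ℝ => (1 - Real.cos u)/u^2 := by
      funext u; simp [Function.comp, Real.cos_neg]
    rw [this]
    have : (fun x : ℝ => -x) ⁻¹' (Iic 0) = Ici 0 := by
      ext x; simp
    rw [this]
    exact Iff.mpr integrableOn_Ici_iff_integrableOn_Ioi K4int
  rw [← integrableOn_univ, ← Iic_union_Ioi (a := (0:ℝ))]
  exact hIic.union K4int

lemma R_integral : ∫ u : ℝ, (1 - Real.cos u)/u^2 = π := by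
  have : ∫ u : ℝ, (1 - Real.cos u)/u^2
      = ∫ u : ℝ, (fun x : ℝ => (1 - Real.cos x)/x^2) |u| := by
    congr 1; funext u; simp [Real.cos_abs, sq_abs]
  rw [this, integral_comp_abs (f := fun x : ℝ => (1 - Real.cos x)/x^2), K4]
  ring

-- Part 1
lemma part1 (c : ℝ) :
    (∫ t : ℝ, (1 - Real.cos (t * c)) / (π * t ^ 2)) = |c| := by
  rcases eq_or_ne c 0 with rfl | hc
  · simp
  have hπ : (0:ℝ) < π := Real.pi_pos
  have key : ∀ t : ℝ, (1 - Real.cos (t * c)) / (π * t ^ 2)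
      = c^2 * ((1/π) * ((fun u : ℝ => (1 - Real.cos u)/u^2) (c * t))) := by
    intro t
    rcases eq_or_ne t 0 with rfl | ht
    · simp
    · have h1 : c * t ≠ 0 := mul_ne_zero hc ht
      field_simp
  simp_rw [key]
  rw [integral_const_mul, integral_const_mul]
  rw [Measure.integral_comp_mul_left (fun u : ℝ => (1 - Real.cos u)/u^2) c, R_integral]
  rw [smul_eq_mul, abs_inv]
  rw [(by rw [sq_abs] : c^2 = |c|^2)]
  field_simp

lemma part1_integrable (c : ℝ) :
    Integrable (fun t : ℝ => (1 - Real.cos (t * c)) / (π * t ^ 2)) := by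
  rcases eq_or_ne c 0 with rfl | hc
  · simpa using integrable_zero ℝ ℝ (volume : Measure ℝ)
  have key : ∀ t : ℝ, (1 - Real.cos (t * c)) / (π * t ^ 2)
      = c^2 * ((1/π) * ((fun u : ℝ => (1 - Real.cos u)/u^2) (c * t))) := by
    intro t
    rcases eq_or_ne t 0 with rfl | ht
    · simp
    · have h1 : c * t ≠ 0 := mul_ne_zero hc ht
      field_simp
  simp_rw [key]
  exact ((R_integrable.comp_mul_left' hc).const_mul _).const_mul _

lemma part1_nonneg (c : ℝ) (t : ℝ) : 0 ≤ (1 - Real.cos (t * c)) / (π * t ^ 2) :=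
  div_nonneg (by nlinarith [Real.cos_le_one (t*c)]) (by positivity)

lemma P1 (c : ℝ) :
    ∫⁻ t : ℝ, ENNReal.ofReal ((1 - Real.cos (t * c)) / (π * t ^ 2))
      = ENNReal.ofReal |c| := by
  rw [← ofReal_integral_eq_lintegral_ofReal (part1_integrable c)
    (Eventually.of_forall (part1_nonneg c)), part1 c]

section Char
variable {Ω : Type*} [MeasurableSpace Ω] {μ : Measure Ω} [IsProbabilityMeasure μ]

lemma int_cos {W : Ω → ℝ} (hW : Measurable W) (r : ℝ) :
    Integrable (fun ω => Real.cos (r * W ω)) μ := by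
  refine Integrable.mono' (integrable_const (1:ℝ)) ?_ ?_
  · exact (Real.measurable_cos.comp (measurable_const.mul hW)).aestronglyMeasurable
  · exact Eventually.of_forall fun ω => by
      rw [Real.norm_eq_abs]; exact Real.abs_cos_le_one _

lemma int_sin {W : Ω → ℝ} (hW : Measurable W) (r : ℝ) :
    Integrable (fun ω => Real.sin (r * W ω)) μ := by
  refine Integrable.mono' (integrable_const (1:ℝ)) ?_ ?_
  · exact (Real.measurable_sin.comp (measurable_const.mul hW)).aestronglyMeasurable
  · exact Eventually.of_forall fun ω => by
      rw [Real.norm_eq_abs]; exact Real.abs_sin_le_one _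

lemma char_eq {W : Ω → ℝ} (hW : Measurable W) (r : ℝ) :
    ∫ ω, Complex.exp (Complex.I * (r * W ω)) ∂μ
      = ((∫ ω, Real.cos (r * W ω) ∂μ : ℝ) : ℂ)
        + ((∫ ω, Real.sin (r * W ω) ∂μ : ℝ) : ℂ) * Complex.I := by
  have hpt : ∀ ω, Complex.exp (Complex.I * (r * W ω))
      = ((Real.cos (r * W ω) : ℂ)) + ((Real.sin (r * W ω) : ℂ)) * Complex.I := by
    intro ω
    rw [mul_comm]
    push_cast
    rw [Complex.exp_mul_I]
  have icos : Integrable (fun ω => ((Real.cos (r * W ω) : ℝ) : ℂ)) μ := (int_cos hW r).ofReal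
  have isin : Integrable (fun ω => ((Real.sin (r * W ω) : ℝ) : ℂ)) μ := (int_sin hW r).ofReal
  simp_rw [hpt]
  rw [integral_add icos (isin.mul_const Complex.I), integral_mul_const]
  have c1 : ∫ ω, ((Real.cos (r * W ω) : ℝ) : ℂ) ∂μ
      = ((∫ ω, Real.cos (r * W ω) ∂μ : ℝ) : ℂ) := integral_ofReal
  have c2 : ∫ ω, ((Real.sin (r * W ω) : ℝ) : ℂ) ∂μ
      = ((∫ ω, Real.sin (r * W ω) ∂μ : ℝ) : ℂ) := integral_ofReal
  rw [c1, c2]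

lemma char_re {X Y : Ω → ℝ} (hX : Measurable X) (hY : Measurable Y)
    (hindep : ProbabilityTheory.IndepFun X Y μ) (t : ℝ) :
    ((∫ ω, Complex.exp (Complex.I * (t * X ω)) ∂μ)
      * (∫ ω, Complex.exp (Complex.I * ((-t : ℝ) * Y ω)) ∂μ)).re
      = ∫ ω, Real.cos (t * (X ω - Y ω)) ∂μ := by
  have hYe := char_eq (μ := μ) hY (-t)
  have h1 : (fun ω => Real.cos ((-t) * Y ω)) = fun ω => Real.cos (t * Y ω) := by
    funext ω; rw [neg_mul, Real.cos_neg]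
  have h2 : (fun ω => Real.sin ((-t) * Y ω)) = fun ω => -Real.sin (t * Y ω) := by
    funext ω; rw [neg_mul, Real.sin_neg]
  rw [h1, h2, integral_neg] at hYe
  rw [char_eq (μ := μ) hX t, hYe]
  have hre : ∀ (A B C D : ℝ), (((A:ℂ) + (B:ℂ)*Complex.I) * ((C:ℂ) + ((-D : ℝ):ℂ)*Complex.I)).re
      = A*C + B*D := by
    intro A B C D
    simp [Complex.mul_re, Complex.add_re, Complex.add_im]
  rw [hre]
  have hcc := (hindep.comp (Real.measurable_cos.comp (measurable_const.mul measurable_id))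
    (Real.measurable_cos.comp (measurable_const.mul measurable_id))
    : ProbabilityTheory.IndepFun (fun ω => Real.cos (t * X ω)) (fun ω => Real.cos (t * Y ω)) μ)
  have hss := (hindep.comp (Real.measurable_sin.comp (measurable_const.mul measurable_id))
    (Real.measurable_sin.comp (measurable_const.mul measurable_id))
    : ProbabilityTheory.IndepFun (fun ω => Real.sin (t * X ω)) (fun ω => Real.sin (t * Y ω)) μ)
  have e1 := hcc.integral_mul_eq_mul_integral (int_cos hX t).aestronglyMeasurable (int_cos hY t).aestronglyMeasurable
  have e2 := hss.integral_mul_eq_mul_integral (int_sin hX t).aestronglyMeasurable (int_sin hY t).aestronglyMeasurable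
  simp only [Function.comp_def, Pi.mul_apply, id] at e1 e2
  have i1 : Integrable (fun ω => Real.cos (t * X ω) * Real.cos (t * Y ω)) μ := by
    refine Integrable.mono' (integrable_const (1:ℝ))
      (((Real.measurable_cos.comp (measurable_const.mul hX)).mul
        (Real.measurable_cos.comp (measurable_const.mul hY))).aestronglyMeasurable)
      (Eventually.of_forall fun ω => ?_)
    rw [norm_mul, Real.norm_eq_abs, Real.norm_eq_abs]
    nlinarith [Real.abs_cos_le_one (t * X ω), Real.abs_cos_le_one (t * Y ω),
      abs_nonneg (Real.cos (t * X ω)), abs_nonneg (Real.cos (t * Y ω))]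
  have i2 : Integrable (fun ω => Real.sin (t * X ω) * Real.sin (t * Y ω)) μ := by
    refine Integrable.mono' (integrable_const (1:ℝ))
      (((Real.measurable_sin.comp (measurable_const.mul hX)).mul
        (Real.measurable_sin.comp (measurable_const.mul hY))).aestronglyMeasurable)
      (Eventually.of_forall fun ω => ?_)
    rw [norm_mul, Real.norm_eq_abs, Real.norm_eq_abs]
    nlinarith [Real.abs_sin_le_one (t * X ω), Real.abs_sin_le_one (t * Y ω),
      abs_nonneg (Real.sin (t * X ω)), abs_nonneg (Real.sin (t * Y ω))]
  rw [← e1, ← e2]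
  rw [← integral_add i1 i2]
  congr 1; funext ω
  rw [mul_sub, Real.cos_sub]

end Char

theorem integral_one_sub_cos_and_expectation_abs
    (a b : ℝ)
    {Ω : Type*} [MeasurableSpace Ω] {μ : Measure Ω} [IsProbabilityMeasure μ]
    (X Y : Ω → ℝ) (hX : Measurable X) (hY : Measurable Y)
    (hindep : IndepFun X Y μ)
    (hXint : Integrable X μ) (hYint : Integrable Y μ)
    (φX φY : ℝ → ℂ)
    (hφX : ∀ t, φX t = ∫ ω, Complex.exp (Complex.I * (t * X ω)) ∂μ)
    (hφY : ∀ t, φY t = ∫ ω, Complex.exp (Complex.I * (t * Y ω)) ∂μ) :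
    (∫ t : ℝ, (1 - Real.cos (t * (a - b))) / (π * t ^ 2)) = |a - b| ∧
    (∫ ω, |X ω - Y ω| ∂μ)
      = ∫ t : ℝ, (1 - (φX t * φY (-t)).re) / (π * t ^ 2) := by
  have hZ : Measurable (fun ω => X ω - Y ω) := hX.sub hY
  have hZint : Integrable (fun ω => X ω - Y ω) μ := hXint.sub hYint
  refine ⟨part1 (a - b), ?_⟩
  -- Step B : pointwise identity in t
  have hstepB : ∀ t : ℝ, (1 - (φX t * φY (-t)).re) / (π * t ^ 2)
      = ∫ ω, (1 - Real.cos (t * (X ω - Y ω))) / (π * t ^ 2) ∂μ := by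
    intro t
    have hre : (φX t * φY (-t)).re = ∫ ω, Real.cos (t * (X ω - Y ω)) ∂μ := by
      rw [hφX t, hφY (-t)]
      exact char_re (μ := μ) hX hY hindep t
    rw [hre, MeasureTheory.integral_div]
    congr 1
    rw [integral_sub (integrable_const 1) (int_cos (μ := μ) hZ t)]
    simp
  have hω_int : ∀ t : ℝ,
      Integrable (fun ω => (1 - Real.cos (t * (X ω - Y ω))) / (π * t ^ 2)) μ := by
    intro t
    rcases eq_or_ne t 0 with rfl | ht
    · simp only [zero_mul, Real.cos_zero, sub_self, zero_div]
      exact integrable_const 0 |>.congr (Eventually.of_forall fun ω => by norm_num)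
    · have hden : (0:ℝ) < π * t ^ 2 := by positivity
      refine Integrable.mono' (integrable_const (2/(π*t^2)))
        (((measurable_const.sub (Real.measurable_cos.comp
          (measurable_const.mul hZ))).div_const _).aestronglyMeasurable)
        (Eventually.of_forall fun ω => ?_)
      rw [Real.norm_eq_abs, abs_div, abs_of_pos hden]
      refine div_le_div₀ (by norm_num) ?_ hden le_rfl
      rw [abs_sub_comm, abs_le]
      constructor <;> nlinarith [Real.cos_le_one (t * (X ω - Y ω)),
        Real.neg_one_le_cos (t * (X ω - Y ω))]
  -- measurability of the kernel
  have hFmeas : Measurable (Function.uncurry fun (t : ℝ) (ω : Ω) =>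
      ENNReal.ofReal ((1 - Real.cos (t * (X ω - Y ω))) / (π * t ^ 2))) := by
    apply ENNReal.measurable_ofReal.comp
    exact (measurable_const.sub (Real.measurable_cos.comp
        (measurable_fst.mul (hZ.comp measurable_snd)))).div
      (measurable_const.mul (measurable_fst.pow_const 2))
  set g : ℝ → ℝ := fun t => ∫ ω, (1 - Real.cos (t * (X ω - Y ω))) / (π * t ^ 2) ∂μ with hgdef
  have hL : ∀ t : ℝ, ENNReal.ofReal (g t)
      = ∫⁻ ω, ENNReal.ofReal ((1 - Real.cos (t * (X ω - Y ω))) / (π * t ^ 2)) ∂μ :=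
    fun t => ofReal_integral_eq_lintegral_ofReal (hω_int t)
      (Eventually.of_forall fun ω => part1_nonneg _ t)
  have hg_nonneg : ∀ t, 0 ≤ g t :=
    fun t => integral_nonneg fun ω => part1_nonneg _ t
  have hg_meas : Measurable g := by
    have : g = fun t => (∫⁻ ω, ENNReal.ofReal
        ((1 - Real.cos (t * (X ω - Y ω))) / (π * t ^ 2)) ∂μ).toReal := by
      funext t
      rw [← hL t, ENNReal.toReal_ofReal (hg_nonneg t)]
    rw [this]
    exact hFmeas.lintegral_prod_right.ennreal_toReal
  have swap : ∫⁻ t : ℝ, ∫⁻ ω, ENNReal.ofReal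
        ((1 - Real.cos (t * (X ω - Y ω))) / (π * t ^ 2)) ∂μ
      = ∫⁻ ω, (∫⁻ t : ℝ, ENNReal.ofReal
        ((1 - Real.cos (t * (X ω - Y ω))) / (π * t ^ 2))) ∂μ :=
    lintegral_lintegral_swap hFmeas.aemeasurable
  have inner : ∀ ω, (∫⁻ t : ℝ, ENNReal.ofReal
        ((1 - Real.cos (t * (X ω - Y ω))) / (π * t ^ 2)))
      = ENNReal.ofReal |X ω - Y ω| := fun ω => P1 (X ω - Y ω)
  have habs : ∫⁻ ω, ENNReal.ofReal |X ω - Y ω| ∂μ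
      = ENNReal.ofReal (∫ ω, |X ω - Y ω| ∂μ) :=
    (ofReal_integral_eq_lintegral_ofReal hZint.abs
      (Eventually.of_forall fun ω => abs_nonneg _)).symm
  have main : ∫ t : ℝ, g t = ∫ ω, |X ω - Y ω| ∂μ := by
    rw [integral_eq_lintegral_of_nonneg_ae (Eventually.of_forall hg_nonneg)
      hg_meas.aestronglyMeasurable]
    simp_rw [hL, swap, inner, habs]
    rw [ENNReal.toReal_ofReal (integral_nonneg fun ω => abs_nonneg _)]
  rw [← main]
  congr 1
  funext t
  exact (hstepB t).symm
end
end
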